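/- arXiv:2408.15081 — 4 statements merged into one kernel-verified Lean document; each statement's English description precedes it below -/
import Mathlib

section
/- Let p>0, α∈(0,2), T>0, σ>0, and let Q̃ be a Borel probability measure on (0,∞). Then for every a>0, the intensity identity underlying the series representation of a one-dimensional proper p-tempered α-stable Lévy process holds: ∫_0^∞ [ ∫_{(0,∞)} ∫_0^∞ ∫_0^1 𝟙{ min( (αs/(σT))^{−1/α} , r^{1/p} u^{1/α} v^{−1/p} ) > a } du · e^{−r} dr · dQ̃(v) ] ds = T · σ ∫_a^∞ q(r^p) r^{−α−1} dr, i.e. the left-hand side equals T·M((a,∞)). -/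
open MeasureTheory Set Filter Topology

lemma u_integral {c : ℝ} (hc : 0 < c) :
    ∫ u in Set.Ioo (0:ℝ) 1, (if c < u then (1:ℝ) else 0) = max (1 - c) 0 := by
  have h : ∀ u : ℝ, (if c < u then (1:ℝ) else 0) = (Set.Ioi c).indicator (fun _ => (1:ℝ)) u := by
    intro u; simp [Set.indicator_apply]
  simp_rw [h]
  rw [setIntegral_indicator measurableSet_Ioi]
  have hset : Set.Ioo (0:ℝ) 1 ∩ Set.Ioi c = Set.Ioo c 1 := by
    ext u
    simp only [Set.mem_inter_iff, Set.mem_Ioo, Set.mem_Ioi]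
    constructor
    · rintro ⟨⟨_, h1⟩, h2⟩; exact ⟨h2, h1⟩
    · rintro ⟨h2, h1⟩; exact ⟨⟨hc.trans h2, h1⟩, h2⟩
  rw [hset, setIntegral_const, smul_eq_mul, mul_one, measureReal_def, Real.volume_Ioo]
  rcases le_or_gt (1:ℝ) c with h1 | h1
  · rw [ENNReal.ofReal_eq_zero.mpr (by linarith), ENNReal.toReal_zero,
      max_eq_right (by linarith)]
  · rw [ENNReal.toReal_ofReal (by linarith), max_eq_left (by linarith)]

lemma cond_iff {p α a r v u : ℝ} (hp : 0 < p) (hα : 0 < α) (ha : 0 < a)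
    (hr : 0 < r) (hv : 0 < v) (hu : 0 < u) :
    (a < r ^ (1/p) * u ^ (1/α) * v ^ (-1/p)) ↔ a ^ α * v ^ (α/p) * r ^ (-(α/p)) < u := by
  have hB : (0:ℝ) < r ^ (1/p) * u ^ (1/α) * v ^ (-1/p) := by positivity
  rw [← Real.rpow_lt_rpow_iff ha.le hB.le hα]
  have hexp : (r ^ (1/p) * u ^ (1/α) * v ^ (-1/p)) ^ α
      = r ^ (α/p) * u * v ^ (-(α/p)) := by
    rw [Real.mul_rpow (by positivity) (by positivity),
      Real.mul_rpow (by positivity) (by positivity),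
      ← Real.rpow_mul hr.le, ← Real.rpow_mul hu.le, ← Real.rpow_mul hv.le]
    rw [show (1/p) * α = α/p by ring, show (1/α) * α = 1 by field_simp,
      show (-1/p) * α = -(α/p) by ring, Real.rpow_one]
  rw [hexp]
  have hX : (0:ℝ) < v ^ (α/p) := by positivity
  have hY : (0:ℝ) < r ^ (α/p) := by positivity
  rw [Real.rpow_neg hr.le, Real.rpow_neg hv.le]
  rw [show a ^ α * v ^ (α/p) * (r ^ (α/p))⁻¹ = a ^ α * v ^ (α/p) / r ^ (α/p) by ring,
    div_lt_iff₀ hY,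
    show r ^ (α/p) * u * (v ^ (α/p))⁻¹ = r ^ (α/p) * u / v ^ (α/p) by ring,
    lt_div_iff₀ hX]
  constructor <;> intro h <;> nlinarith

lemma c_eq {p α a v : ℝ} (hp : 0 < p) (ha : 0 < a) (hv : 0 < v) {r : ℝ} (hr : 0 < r) :
    a ^ α * v ^ (α/p) * r ^ (-(α/p)) = ((a ^ p * v) / r) ^ (α/p) := by
  rw [Real.div_rpow (by positivity) hr.le, Real.mul_rpow (by positivity) hv.le,
    ← Real.rpow_mul ha.le, show p * (α/p) = α by field_simp,
    Real.rpow_neg hr.le]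
  ring

lemma ibp {p α a v : ℝ} (hp : 0 < p) (hα : 0 < α) (ha : 0 < a) (hv : 0 < v) :
    ∫ t in Set.Ioi a, (p * t ^ (p-1) * v) * ((1 - a ^ α * t ^ (-α)) * Real.exp (-(t ^ p * v)))
      = α * a ^ α * ∫ t in Set.Ioi a, Real.exp (-(t ^ p * v)) * t ^ (-α - 1) := by
  set E : ℝ → ℝ := fun t => Real.exp (-(t ^ p * v)) with hE
  have hEmeas : Measurable E := by measurability
  have hEpos : ∀ t : ℝ, 0 < E t := fun t => Real.exp_pos _
  have hEle1 : ∀ t : ℝ, 0 < t → E t ≤ 1 := by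
    intro t ht
    exact Real.exp_le_one_iff.mpr (neg_nonpos.mpr (by positivity))
  have hEderiv : ∀ t ∈ Set.Ici a, HasDerivAt E (E t * (-(p * t ^ (p-1) * v))) t := by
    intro t ht
    have ht0 : 0 < t := lt_of_lt_of_le ha ht
    have h1 : HasDerivAt (fun t : ℝ => t ^ p * v) (p * t ^ (p-1) * v) t :=
      (Real.hasDerivAt_rpow_const (Or.inl ht0.ne')).mul_const v
    exact h1.neg.exp
  have hE0 : Tendsto E atTop (𝓝 0) := by
    have h1 : Tendsto (fun t : ℝ => t ^ p * v) atTop atTop :=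
      (tendsto_rpow_atTop hp).atTop_mul_const hv
    have h2 : Tendsto (fun t : ℝ => -(t ^ p * v)) atTop atBot :=
      tendsto_neg_atTop_atBot.comp h1
    exact Real.tendsto_exp_atBot.comp h2
  have hF : ∀ t ∈ Set.Ici a, HasDerivAt (fun t => (a ^ α * t ^ (-α) - 1) * E t)
      (a ^ α * (-α * t ^ (-α-1)) * E t
        + (a ^ α * t ^ (-α) - 1) * (E t * (-(p * t ^ (p-1) * v)))) t := by
    intro t ht
    have ht0 : 0 < t := lt_of_lt_of_le ha ht
    have hG : HasDerivAt (fun t : ℝ => a ^ α * t ^ (-α) - 1)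
        (a ^ α * (-α * t ^ (-α-1))) t := by
      have h1 := (Real.hasDerivAt_rpow_const (x := t) (p := -α)
        (Or.inl ht0.ne')).const_mul (a ^ α)
      exact h1.sub_const 1
    exact hG.mul (hEderiv t ht)
  have hint1 : IntegrableOn (fun t => α * a ^ α * (E t * t ^ (-α - 1))) (Set.Ioi a) := by
    apply Integrable.const_mul
    have hrint : IntegrableOn (fun t : ℝ => t ^ (-α - 1)) (Set.Ioi a) :=
      integrableOn_Ioi_rpow_of_lt (by linarith) ha
    apply Integrable.mono' hrint
    · exact ((hEmeas.mul (by measurability)).aestronglyMeasurable)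
    · filter_upwards [ae_restrict_mem measurableSet_Ioi] with t ht
      have ht0 : 0 < t := ha.trans ht
      have h2 : (0:ℝ) ≤ t ^ (-α-1 : ℝ) := by positivity
      rw [Real.norm_eq_abs, abs_of_nonneg (by positivity)]
      calc E t * t ^ (-α-1 : ℝ) ≤ 1 * t ^ (-α-1 : ℝ) :=
            mul_le_mul_of_nonneg_right (hEle1 t ht0) h2
        _ = t ^ (-α-1 : ℝ) := one_mul _
  have hint2 : IntegrableOn
      (fun t => (a ^ α * t ^ (-α) - 1) * (E t * (-(p * t ^ (p-1) * v)))) (Set.Ioi a) := by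
    have hg : IntegrableOn (fun t => E t * (p * t ^ (p-1) * v)) (Set.Ioi a) := by
      apply integrableOn_Ioi_deriv_of_nonneg' (g := fun t => -E t)
      · intro t ht
        have := (hEderiv t ht).neg
        rw [show -(E t * -(p * t ^ (p-1) * v)) = E t * (p * t ^ (p-1) * v) by ring] at this
        exact this
      · intro t ht
        have ht0 : 0 < t := ha.trans ht
        have := (hEpos t).le
        positivity
      · simpa using hE0.neg
    apply Integrable.mono' hg
    · have hra : Measurable (fun t : ℝ => t ^ (-α : ℝ)) := by measurability
      have hrp : Measurable (fun t : ℝ => t ^ (p-1 : ℝ)) := by measurability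
      have hm1 : Measurable (fun t : ℝ => a ^ α * t ^ (-α) - 1) :=
        (hra.const_mul _).sub_const 1
      have hm2 : Measurable (fun t : ℝ => E t * (-(p * t ^ (p-1) * v))) :=
        hEmeas.mul (((hrp.const_mul p).mul_const v).neg)
      exact (hm1.mul hm2).aestronglyMeasurable
    · filter_upwards [ae_restrict_mem measurableSet_Ioi] with t ht
      have ht0 : 0 < t := ha.trans ht
      have hc1 : a ^ α * t ^ (-α) ≤ 1 := by
        have h3 : a ^ α ≤ t ^ α := Real.rpow_le_rpow ha.le (le_of_lt ht) hα.le
        rw [Real.rpow_neg ht0.le, ← div_eq_mul_inv, div_le_one (by positivity)]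
        exact h3
      have hc0 : (0:ℝ) < a ^ α * t ^ (-α) := by positivity
      have hP : (0:ℝ) ≤ p * t ^ (p-1) * v := by positivity
      rw [Real.norm_eq_abs, abs_mul, abs_mul, abs_neg,
        abs_of_nonneg (hEpos t).le, abs_of_nonneg hP,
        abs_of_nonpos (by linarith : a ^ α * t ^ (-α) - 1 ≤ 0)]
      have h4 : -(a ^ α * t ^ (-α) - 1) ≤ 1 := by linarith
      calc -(a ^ α * t ^ (-α) - 1) * (E t * (p * t ^ (p-1) * v))
            ≤ 1 * (E t * (p * t ^ (p-1) * v)) :=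
            mul_le_mul_of_nonneg_right h4 (by positivity)
        _ = E t * (p * t ^ (p-1) * v) := one_mul _
  have hint1' : IntegrableOn (fun t => a ^ α * (-α * t ^ (-α-1)) * E t) (Set.Ioi a) := by
    have heq : (fun t : ℝ => a ^ α * (-α * t ^ (-α-1)) * E t)
        = fun t => -(α * a ^ α * (E t * t ^ (-α - 1))) := by
      funext t; ring
    rw [heq]; exact hint1.neg
  have htends : Tendsto (fun t => (a ^ α * t ^ (-α) - 1) * E t) atTop (𝓝 0) := by
    have hG0 : Tendsto (fun t : ℝ => a ^ α * t ^ (-α) - 1) atTop (𝓝 (-1)) := by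
      have h1 := (tendsto_rpow_neg_atTop hα).const_mul (a ^ α)
      have h2 := h1.sub_const 1
      rw [show a ^ α * 0 - 1 = -1 by ring] at h2
      exact h2
    have h4 := hG0.mul hE0
    rw [show (-1 : ℝ) * 0 = 0 by ring] at h4
    exact h4
  have key := integral_Ioi_of_hasDerivAt_of_tendsto' hF (hint1'.add hint2) htends
  have hFa : (a ^ α * a ^ (-α) - 1) * E a = 0 := by
    rw [← Real.rpow_add ha]; simp
  rw [hFa, integral_add hint1' hint2] at key
  have h5 : ∫ t in Set.Ioi a, (fun t => a ^ α * (-α * t ^ (-α-1)) * E t) t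
      = -(α * a ^ α * ∫ t in Set.Ioi a, E t * t ^ (-α - 1)) := by
    have heq : (fun t : ℝ => a ^ α * (-α * t ^ (-α-1)) * E t)
        = fun t => -(α * a ^ α * (E t * t ^ (-α - 1))) := by
      funext t; ring
    rw [heq, integral_neg, integral_const_mul]
  have h6 : (fun t : ℝ => (p * t ^ (p-1) * v) * ((1 - a ^ α * t ^ (-α)) * E t))
      = fun t => (a ^ α * t ^ (-α) - 1) * (E t * (-(p * t ^ (p-1) * v))) := by
    funext t; ring
  rw [h6]
  rw [h5] at key
  linarith

lemma image_Ioi {p v a : ℝ} (hp : 0 < p) (hv : 0 < v) (ha : 0 < a) :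
    (fun t : ℝ => t ^ p * v) '' Set.Ioi a = Set.Ioi (a ^ p * v) := by
  ext y
  simp only [Set.mem_image, Set.mem_Ioi]
  constructor
  · rintro ⟨t, ht, rfl⟩
    exact mul_lt_mul_of_pos_right (Real.rpow_lt_rpow ha.le ht hp) hv
  · intro hy
    have hy0 : 0 < y := lt_trans (by positivity) hy
    refine ⟨(y / v) ^ (1/p), ?_, ?_⟩
    · have h1 : a ^ p < y / v := (lt_div_iff₀ hv).mpr hy
      have h2 := Real.rpow_lt_rpow (by positivity) h1 (by positivity : (0:ℝ) < 1/p)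
      rwa [← Real.rpow_mul ha.le, mul_one_div, div_self hp.ne', Real.rpow_one] at h2
    · rw [← Real.rpow_mul (by positivity), one_div_mul_cancel hp.ne', Real.rpow_one]
      field_simp

lemma r_integral {p α a v : ℝ} (hp : 0 < p) (hα : 0 < α) (ha : 0 < a) (hv : 0 < v) :
    ∫ r in Set.Ioi (0:ℝ), max (1 - a ^ α * v ^ (α/p) * r ^ (-(α/p))) 0 * Real.exp (-r)
      = α * a ^ α * ∫ t in Set.Ioi a, Real.exp (-(t ^ p * v)) * t ^ (-α - 1) := by
  have hb : ∀ r ∈ Set.Ioi (0:ℝ),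
      max (1 - a ^ α * v ^ (α/p) * r ^ (-(α/p))) 0 * Real.exp (-r)
        = (Set.Ioi (a ^ p * v)).indicator
            (fun r => (1 - a ^ α * v ^ (α/p) * r ^ (-(α/p))) * Real.exp (-r)) r := by
    intro r hr
    have hr0 : 0 < r := hr
    have hcr : a ^ α * v ^ (α/p) * r ^ (-(α/p)) = ((a ^ p * v) / r) ^ (α/p) :=
      c_eq hp ha hv hr0
    by_cases h : a ^ p * v < r
    · rw [Set.indicator_of_mem (Set.mem_Ioi.mpr h), max_eq_left]
      have h1 : (a ^ p * v) / r < 1 := (div_lt_one hr0).mpr h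
      have h2 : ((a ^ p * v) / r) ^ (α/p) < 1 :=
        Real.rpow_lt_one (by positivity) h1 (by positivity)
      rw [hcr]; linarith
    · push_neg at h
      rw [Set.indicator_of_notMem (by simpa using h)]
      have h2 : (1:ℝ) ≤ ((a ^ p * v) / r) ^ (α/p) :=
        Real.one_le_rpow ((one_le_div hr0).mpr h) (by positivity)
      rw [max_eq_right (by rw [hcr]; linarith), zero_mul]
  rw [setIntegral_congr_fun measurableSet_Ioi hb,
    setIntegral_indicator measurableSet_Ioi,
    Set.inter_eq_right.mpr (Set.Ioi_subset_Ioi (by positivity))]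
  have hderiv : ∀ x ∈ Set.Ioi a,
      HasDerivWithinAt (fun t : ℝ => t ^ p * v) (p * x ^ (p-1) * v) (Set.Ioi a) x := by
    intro x hx
    exact ((Real.hasDerivAt_rpow_const
      (Or.inl (ha.trans hx).ne')).mul_const v).hasDerivWithinAt
  have hinj : Set.InjOn (fun t : ℝ => t ^ p * v) (Set.Ioi a) := by
    intro x hx y hy hxy
    have hx0 : 0 < x := ha.trans hx
    have hy0 : 0 < y := ha.trans hy
    have hxyp : x ^ p = y ^ p := mul_right_cancel₀ hv.ne' hxy
    rcases lt_trichotomy x y with h | h | h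
    · exact absurd hxyp (ne_of_lt (Real.rpow_lt_rpow hx0.le h hp))
    · exact h
    · exact absurd hxyp.symm (ne_of_lt (Real.rpow_lt_rpow hy0.le h hp))
  rw [← image_Ioi hp hv ha,
    integral_image_eq_integral_abs_deriv_smul measurableSet_Ioi hderiv hinj]
  have hfix : ∀ t ∈ Set.Ioi a,
      |p * t ^ (p-1) * v| •
        ((1 - a ^ α * v ^ (α/p) * (t ^ p * v) ^ (-(α/p))) * Real.exp (-(t ^ p * v)))
      = (p * t ^ (p-1) * v) * ((1 - a ^ α * t ^ (-α)) * Real.exp (-(t ^ p * v))) := by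
    intro t ht
    have ht0 : 0 < t := ha.trans ht
    have h1 : (0:ℝ) < p * t ^ (p-1) * v := by positivity
    rw [abs_of_pos h1, smul_eq_mul]
    have h2 : a ^ α * v ^ (α/p) * (t ^ p * v) ^ (-(α/p)) = a ^ α * t ^ (-α) := by
      rw [c_eq hp ha hv (by positivity : (0:ℝ) < t ^ p * v),
        mul_div_mul_right _ _ hv.ne', ← Real.div_rpow ha.le ht0.le,
        ← Real.rpow_mul (by positivity), show p * (α/p) = α by field_simp,
        Real.div_rpow ha.le ht0.le, Real.rpow_neg ht0.le, div_eq_mul_inv]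
    rw [h2]
  rw [setIntegral_congr_fun measurableSet_Ioi hfix]
  exact ibp hp hα ha hv

lemma s_cond {α T σ a : ℝ} (hα : 0 < α) (hT : 0 < T) (hσ : 0 < σ) (ha : 0 < a)
    {s : ℝ} (hs : 0 < s) :
    (a < (α * s / (σ * T)) ^ (-1/α)) ↔ s < σ * T * a ^ (-α) / α := by
  have hx : 0 < α * s / (σ * T) := by positivity
  have h1 : a = (a ^ (-α)) ^ (-1/α) := by
    rw [← Real.rpow_mul ha.le, show (-α) * (-1/α) = 1 by field_simp, Real.rpow_one]
  conv_lhs => rw [h1]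
  rw [Real.rpow_lt_rpow_iff_of_neg (by positivity) hx
    (by rw [neg_div]; exact neg_neg_iff_pos.mpr (by positivity) : -1/α < 0)]
  rw [div_lt_iff₀ (by positivity), lt_div_iff₀ hα]
  constructor <;> intro h <;> nlinarith

lemma fubini_swap {p α a : ℝ} (hp : 0 < p) (hα : 0 < α) (ha : 0 < a)
    (Q : Measure ℝ) [IsProbabilityMeasure Q] (hQpos : ∀ᵐ w ∂Q, 0 < w) :
    ∫ r in Set.Ioi a, ∫ w, Real.exp (-(r ^ p * w)) * r ^ (-α - 1) ∂Q
      = ∫ w, (∫ r in Set.Ioi a, Real.exp (-(r ^ p * w)) * r ^ (-α - 1)) ∂Q := by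
  have hmeas : Measurable (fun z : ℝ × ℝ => Real.exp (-(z.1 ^ p * z.2)) * z.1 ^ (-α - 1)) := by
    measurability
  have hg : Integrable (fun z : ℝ × ℝ => z.1 ^ (-α - 1 : ℝ))
      ((volume.restrict (Set.Ioi a)).prod Q) := by
    have hm : Measurable (fun z : ℝ × ℝ => z.1 ^ (-α - 1 : ℝ)) := by measurability
    rw [integrable_prod_iff hm.aestronglyMeasurable]
    constructor
    · filter_upwards with x using integrable_const _
    · simp only [integral_const, measureReal_def, measure_univ, ENNReal.toReal_one, one_smul]
      exact (integrableOn_Ioi_rpow_of_lt (by linarith) ha).norm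
  have hint : Integrable
      (Function.uncurry fun r w => Real.exp (-(r ^ p * w)) * r ^ (-α - 1 : ℝ))
      ((volume.restrict (Set.Ioi a)).prod Q) := by
    apply Integrable.mono' hg hmeas.aestronglyMeasurable
    have h1 : ∀ᵐ z ∂((volume.restrict (Set.Ioi a)).prod Q), z.1 ∈ Set.Ioi a :=
      (Measure.quasiMeasurePreserving_fst).ae (ae_restrict_mem measurableSet_Ioi)
    have h2 : ∀ᵐ z ∂((volume.restrict (Set.Ioi a)).prod Q), 0 < z.2 :=
      (Measure.quasiMeasurePreserving_snd).ae hQpos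
    filter_upwards [h1, h2] with z hz1 hz2
    obtain ⟨r, w⟩ := z
    simp only [Function.uncurry_apply_pair]
    have hz0 : 0 < r := ha.trans hz1
    have hw0 : 0 < w := hz2
    have he1 : Real.exp (-(r ^ p * w)) ≤ 1 :=
      Real.exp_le_one_iff.mpr (neg_nonpos.mpr (by positivity))
    rw [norm_mul, Real.norm_eq_abs, Real.norm_eq_abs, abs_of_pos (Real.exp_pos _),
      abs_of_nonneg (by positivity : (0:ℝ) ≤ r ^ (-α - 1 : ℝ))]
    calc Real.exp (-(r ^ p * w)) * r ^ (-α - 1 : ℝ)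
        ≤ 1 * r ^ (-α - 1 : ℝ) := mul_le_mul_of_nonneg_right he1 (by positivity)
      _ = r ^ (-α - 1 : ℝ) := one_mul _
  exact integral_integral_swap hint

/-- Intensity identity underlying the series representation of a
one-dimensional proper `p`-tempered `α`-stable Lévy process: for every `a > 0`,
`∫_0^∞ ∫_{(0,∞)} ∫_0^∞ ∫_0^1 𝟙{min((αs/(σT))^{−1/α}, r^{1/p} u^{1/α} v^{−1/p}) > a}
  du · e^{−r} dr dQ̃(v) ds = T · σ ∫_a^∞ q(r^p) r^{−α−1} dr`,
where `q(x) = ∫ e^{−xw} dQ̃(w)` and `Q̃` is a Borel probability measure on `(0,∞)`. -/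
theorem series_intensity_identity (p α T σ a : ℝ) (hp : 0 < p) (hα : α ∈ Set.Ioo (0:ℝ) 2)
    (hT : 0 < T) (hσ : 0 < σ) (ha : 0 < a)
    (Q : Measure ℝ) [IsProbabilityMeasure Q] (hQ : Q (Set.Iic 0) = 0) :
    (∫ s in Set.Ioi (0:ℝ),
      ∫ v, (∫ r in Set.Ioi (0:ℝ),
        (∫ u in Set.Ioo (0:ℝ) 1,
          if a < min ((α * s / (σ * T)) ^ (-1 / α)) (r ^ (1 / p) * u ^ (1 / α) * v ^ (-1 / p))
          then (1:ℝ) else 0) * Real.exp (-r)) ∂Q) =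
      T * (σ * ∫ r in Set.Ioi a, (∫ w, Real.exp (-(r ^ p) * w) ∂Q) * r ^ (-α - 1)) := by
  obtain ⟨hα0, _⟩ := hα
  have hQpos : ∀ᵐ w ∂Q, 0 < w := by
    rw [ae_iff]; simp only [not_lt]; exact hQ
  have hK : (∫ v, (∫ r in Set.Ioi (0:ℝ),
        (∫ u in Set.Ioo (0:ℝ) 1,
          if a < r ^ (1 / p) * u ^ (1 / α) * v ^ (-1 / p) then (1:ℝ) else 0)
          * Real.exp (-r)) ∂Q)
      = α * a ^ α * ∫ v, (∫ t in Set.Ioi a,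
          Real.exp (-(t ^ p * v)) * t ^ (-α - 1)) ∂Q := by
    rw [← integral_const_mul]
    apply integral_congr_ae
    filter_upwards [hQpos] with v hv
    have hu : ∀ r ∈ Set.Ioi (0:ℝ),
        (∫ u in Set.Ioo (0:ℝ) 1,
          if a < r ^ (1 / p) * u ^ (1 / α) * v ^ (-1 / p) then (1:ℝ) else 0)
          * Real.exp (-r)
        = max (1 - a ^ α * v ^ (α/p) * r ^ (-(α/p))) 0 * Real.exp (-r) := by
      intro r hr
      have hr0 : (0:ℝ) < r := hr
      congr 1
      calc (∫ u in Set.Ioo (0:ℝ) 1,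
            if a < r ^ (1 / p) * u ^ (1 / α) * v ^ (-1 / p) then (1:ℝ) else 0)
          = ∫ u in Set.Ioo (0:ℝ) 1,
            (if a ^ α * v ^ (α/p) * r ^ (-(α/p)) < u then (1:ℝ) else 0) := by
            apply setIntegral_congr_fun measurableSet_Ioo
            intro u hu
            exact if_congr (cond_iff hp hα0 ha hr0 hv hu.1) rfl rfl
        _ = max (1 - a ^ α * v ^ (α/p) * r ^ (-(α/p))) 0 := u_integral (by positivity)
    rw [setIntegral_congr_fun measurableSet_Ioi hu, r_integral hp hα0 ha hv]
  have hs_eq : ∀ s ∈ Set.Ioi (0:ℝ),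
      (∫ v, (∫ r in Set.Ioi (0:ℝ),
        (∫ u in Set.Ioo (0:ℝ) 1,
          if a < min ((α * s / (σ * T)) ^ (-1 / α))
            (r ^ (1 / p) * u ^ (1 / α) * v ^ (-1 / p)) then (1:ℝ) else 0)
          * Real.exp (-r)) ∂Q)
      = (Set.Iio (σ * T * a ^ (-α) / α)).indicator
          (fun _ => ∫ v, (∫ r in Set.Ioi (0:ℝ),
            (∫ u in Set.Ioo (0:ℝ) 1,
              if a < r ^ (1 / p) * u ^ (1 / α) * v ^ (-1 / p) then (1:ℝ) else 0)
              * Real.exp (-r)) ∂Q) s := by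
    intro s hs
    have hs0 : (0:ℝ) < s := hs
    by_cases h : a < (α * s / (σ * T)) ^ (-1 / α)
    · rw [Set.indicator_of_mem (Set.mem_Iio.mpr ((s_cond hα0 hT hσ ha hs0).mp h))]
      simp only [lt_min_iff, h, true_and]
    · have hns : ¬ s < σ * T * a ^ (-α) / α :=
        fun hlt => h ((s_cond hα0 hT hσ ha hs0).mpr hlt)
      rw [Set.indicator_of_notMem (by simpa using hns)]
      simp only [lt_min_iff, h, false_and, if_false, integral_zero, zero_mul]
  rw [setIntegral_congr_fun measurableSet_Ioi hs_eq,
    setIntegral_indicator measurableSet_Iio, Set.Ioi_inter_Iio, setIntegral_const,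
    measureReal_def, Real.volume_Ioo, sub_zero, ENNReal.toReal_ofReal (by positivity), smul_eq_mul, hK]
  have h1 : ∀ r ∈ Set.Ioi a, (∫ w, Real.exp (-(r ^ p) * w) ∂Q) * r ^ (-α - 1)
      = ∫ w, Real.exp (-(r ^ p * w)) * r ^ (-α - 1) ∂Q := by
    intro r _
    rw [← integral_mul_const]
    congr 1; funext w; rw [neg_mul]
  rw [setIntegral_congr_fun measurableSet_Ioi h1, fubini_swap hp hα0 ha Q hQpos]
  have hpow : a ^ (-α) * a ^ α = 1 := by
    rw [← Real.rpow_add ha]; simp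
  set J := ∫ w, (∫ t in Set.Ioi a, Real.exp (-(t ^ p * w)) * t ^ (-α - 1)) ∂Q with hJ
  field_simp
  linear_combination J * hpow
end

section
/- For every real s with 0<s<1, the series ∑_{n=1}^∞ ( n^{−s} − (n^{1−s} − (n−1)^{1−s})/(1−s) ) converges and its sum equals ζ(s), the value at s of the analytic continuation of the Riemann zeta function. -/
open Complex Set Filter Metric

noncomputable def zterm (n : ℕ) (z : ℂ) : ℂ :=
  ((n : ℂ) + 1) ^ (-z) - (((n : ℂ) + 1) ^ (1 - z) - (n : ℂ) ^ (1 - z)) / (1 - z)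

lemma zterm_bound {z : ℂ} {a R : ℝ} (ha : 0 < a) (haz : a ≤ z.re) (hzR : ‖z‖ ≤ R)
    (hz1 : z ≠ 1) {n : ℕ} (hn : 1 ≤ n) : ‖zterm n z‖ ≤ R * (n : ℝ) ^ (-a - 1) := by
  have hz0 : z ≠ 0 := by
    intro h; rw [h] at haz; simp at haz; linarith
  have hw : (1 : ℂ) - z ≠ 0 := sub_ne_zero.mpr (Ne.symm hz1)
  have hn0 : (0 : ℝ) < n := by exact_mod_cast hn
  have hn1 : (1 : ℝ) ≤ n := by exact_mod_cast hn
  set C : ℝ := ‖z‖ * (n : ℝ) ^ (-a - 1) with hC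
  have hCnn : 0 ≤ C := by positivity
  set C₀ : ℂ := (((n : ℝ) : ℂ) + 1) ^ (-z) with hC₀
  -- derivative of h t = (t:ℂ)^(-z)
  have hderiv : ∀ t : ℝ, 0 < t → HasDerivAt (fun y : ℝ => ((y : ℂ)) ^ (-z))
      (((t : ℂ)) ^ (-z - 1) * (-z)) t := by
    intro t ht
    have h1 : HasDerivAt (fun y : ℝ => ((y : ℂ)) ^ (-z - 1 + 1) / (-z - 1 + 1))
        (((t : ℂ)) ^ (-z - 1)) t := by
      refine hasDerivAt_ofReal_cpow_const' ht.ne' ?_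
      intro h
      apply hz0
      have : z = 0 := by
        have := congrArg (· + 1) h
        simpa [sub_add_cancel] using by linear_combination -h
      exact this
    have h2 := h1.mul_const (-z)
    have hne : (-z - 1 + 1 : ℂ) ≠ 0 := by
      intro h; apply hz0; linear_combination -h
    refine h2.congr_of_eventuallyEq (Filter.Eventually.of_forall fun y => ?_)
    have : (-z - 1 + 1 : ℂ) = -z := by ring
    rw [this]
    field_simp
  -- inner bound : ∀ x ∈ Icc n (n+1), ‖(x)^(-z) - C₀‖ ≤ C
  have inner : ∀ x : ℝ, x ∈ Icc (n : ℝ) ((n : ℝ) + 1) →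
      ‖((x : ℂ)) ^ (-z) - C₀‖ ≤ C := by
    intro x hx
    have hbound := norm_image_sub_le_of_norm_deriv_le_segment'
      (f := fun y : ℝ => ((y : ℂ)) ^ (-z)) (f' := fun t => ((t : ℂ)) ^ (-z - 1) * (-z))
      (a := x) (b := (n : ℝ) + 1) (C := C)
      (fun t ht => ((hderiv t (by have h1x := hx.1; have h2x := ht.1; linarith)).hasDerivWithinAt))
      ?_ ((n : ℝ) + 1) ?_
    · push_cast at hbound
      calc ‖((x : ℂ)) ^ (-z) - C₀‖ = ‖C₀ - ((x : ℂ)) ^ (-z)‖ := (norm_sub_rev _ _)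
        _ ≤ C * ((n : ℝ) + 1 - x) := hbound
        _ ≤ C * 1 := by
            apply mul_le_mul_of_nonneg_left _ hCnn
            cases hx; linarith
        _ = C := mul_one C
    · intro t ht
      have htn : (n : ℝ) ≤ t := le_trans hx.1 ht.1
      have ht0 : 0 < t := lt_of_lt_of_le hn0 htn
      rw [norm_mul, norm_neg]
      have habs : ‖((t : ℂ)) ^ (-z - 1)‖ = t ^ ((-z - 1).re) := by
        rw [Complex.norm_cpow_eq_rpow_re_of_pos ht0]
      rw [habs]
      have e1 : t ^ ((-z - 1).re) ≤ t ^ (-a - 1) := by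
        apply Real.rpow_le_rpow_of_exponent_le (le_trans hn1 htn)
        simp only [Complex.sub_re, Complex.neg_re, Complex.one_re]
        linarith
      have e2 : t ^ (-a - 1) ≤ (n : ℝ) ^ (-a - 1) := by
        exact Real.rpow_le_rpow_of_nonpos hn0 htn (by linarith)
      calc t ^ ((-z - 1).re) * ‖z‖ ≤ (n : ℝ) ^ (-a - 1) * ‖z‖ := by
            apply mul_le_mul_of_nonneg_right (le_trans e1 e2) (norm_nonneg z)
        _ = C := by rw [hC]; ring
    · constructor <;> cases hx <;> linarith
  -- outer
  set g : ℝ → ℂ := fun x => ((x : ℂ)) ^ (-z + 1) / (-z + 1) - (x : ℂ) * C₀ with hg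
  have hne1 : (-z + 1 : ℂ) ≠ 0 := by
    intro h; apply hw; linear_combination h
  have gderiv : ∀ x : ℝ, 0 < x → HasDerivAt g (((x : ℂ)) ^ (-z) - C₀) x := by
    intro x hx
    have h1 : HasDerivAt (fun y : ℝ => ((y : ℂ)) ^ (-z + 1) / (-z + 1))
        (((x : ℂ)) ^ (-z)) x := hasDerivAt_ofReal_cpow_const' hx.ne' (by
          intro h; apply hz1; linear_combination -h)
    have h2 : HasDerivAt (fun y : ℝ => ((y : ℂ)) * C₀) C₀ x := by
      simpa using (Complex.ofRealCLM.hasDerivAt (x := x)).mul_const C₀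
    exact h1.sub h2
  have mvt := norm_image_sub_le_of_norm_deriv_le_segment'
    (f := g) (f' := fun x => ((x : ℂ)) ^ (-z) - C₀)
    (a := (n : ℝ)) (b := (n : ℝ) + 1) (C := C)
    (fun x hx => (gderiv x (lt_of_lt_of_le hn0 hx.1)).hasDerivWithinAt)
    (fun x hx => inner x ⟨hx.1, hx.2.le⟩)
    ((n : ℝ) + 1) (by constructor <;> linarith)
  -- identify zterm with g n - g (n+1)
  have key : zterm n z = g (n : ℝ) - g ((n : ℝ) + 1) := by
    rw [hg]
    simp only [zterm]
    have hexp : (-z + 1 : ℂ) = 1 - z := by ring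
    rw [hexp, hC₀]
    push_cast
    field_simp
    ring
  rw [key]
  calc ‖g (n : ℝ) - g ((n : ℝ) + 1)‖ = ‖g ((n : ℝ) + 1) - g (n : ℝ)‖ := norm_sub_rev _ _
    _ ≤ C * ((n : ℝ) + 1 - (n : ℝ)) := mvt
    _ = C := by ring
    _ ≤ R * (n : ℝ) ^ (-a - 1) := by
        apply mul_le_mul_of_nonneg_right hzR (Real.rpow_nonneg hn0.le _)

lemma zterm_summable_u {a R : ℝ} (ha : 0 < a) (hR : 0 ≤ R) :
    Summable (fun n : ℕ => R * ((n + 1 : ℕ) : ℝ) ^ (-a - 1)) := by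
  have h : Summable (fun n : ℕ => ((n : ℕ) : ℝ) ^ (-a - 1)) :=
    Real.summable_nat_rpow.mpr (by linarith)
  exact ((summable_nat_add_iff 1).mpr h).mul_left R

lemma zterm_summable {z : ℂ} (hz : 0 < z.re) (hz1 : z ≠ 1) :
    Summable (fun n : ℕ => zterm n z) := by
  rw [← summable_nat_add_iff 1]
  apply Summable.of_norm_bounded (zterm_summable_u hz (norm_nonneg z))
  intro n
  exact zterm_bound hz le_rfl le_rfl hz1 (Nat.le_add_left 1 n)

lemma zterm_differentiableAt {n : ℕ} {z₀ : ℂ} (h1 : z₀ ≠ 1) :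
    DifferentiableAt ℂ (zterm (n + 1)) z₀ := by
  have hb : ((n + 1 : ℕ) : ℂ) ≠ 0 := by exact_mod_cast Nat.succ_ne_zero n
  have hb1 : ((n + 1 : ℕ) : ℂ) + 1 ≠ 0 := by
    intro h
    have := congrArg Complex.re h
    push_cast at this
    simp at this
    linarith [Nat.cast_nonneg (α := ℝ) n]
  have d1 : DifferentiableAt ℂ (fun z : ℂ => (((n + 1 : ℕ) : ℂ) + 1) ^ (-z)) z₀ :=
    (differentiable_neg.const_cpow (Or.inl hb1)).differentiableAt
  have d2 : DifferentiableAt ℂ (fun z : ℂ => (((n + 1 : ℕ) : ℂ) + 1) ^ (1 - z)) z₀ :=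
    ((differentiable_const _ |>.sub differentiable_id).const_cpow (Or.inl hb1)).differentiableAt
  have d3 : DifferentiableAt ℂ (fun z : ℂ => ((n + 1 : ℕ) : ℂ) ^ (1 - z)) z₀ :=
    ((differentiable_const _ |>.sub differentiable_id).const_cpow (Or.inl hb)).differentiableAt
  have d4 : DifferentiableAt ℂ (fun z : ℂ => (1 : ℂ) - z) z₀ :=
    (differentiable_const _ |>.sub differentiable_id).differentiableAt
  exact d1.sub ((d2.sub d3).div d4 (sub_ne_zero.mpr (Ne.symm h1)))

lemma zterm_tail_diffAt {z₀ : ℂ} (h : 0 < z₀.re) (h1 : z₀ ≠ 1) :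
    DifferentiableAt ℂ (fun z => ∑' n : ℕ, zterm (n + 1) z) z₀ := by
  set r : ℝ := min (z₀.re / 2) (dist z₀ 1) with hr
  have hd : 0 < dist z₀ 1 := dist_pos.mpr h1
  have hr0 : 0 < r := lt_min (by linarith) hd
  set R : ℝ := ‖z₀‖ + r with hR
  have hball : ∀ z ∈ Metric.ball z₀ r, z₀.re / 2 ≤ z.re ∧ ‖z‖ ≤ R ∧ z ≠ 1 := by
    intro z hz
    rw [Metric.mem_ball] at hz
    have h1' : |(z - z₀).re| ≤ ‖z - z₀‖ := Complex.abs_re_le_norm _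
    have h2' : ‖z - z₀‖ < r := by rw [dist_eq_norm] at hz; exact hz
    refine ⟨?_, ?_, ?_⟩
    · have : (z - z₀).re = z.re - z₀.re := by simp
      rw [this] at h1'
      have := abs_le.mp h1'
      have hrle : r ≤ z₀.re / 2 := min_le_left _ _
      linarith [this.1]
    · calc ‖z‖ = ‖z₀ + (z - z₀)‖ := by ring_nf
        _ ≤ ‖z₀‖ + ‖z - z₀‖ := norm_add_le _ _
        _ ≤ R := by rw [hR]; linarith
    · intro hzz
      rw [hzz] at hz
      have : dist (1 : ℂ) z₀ = dist z₀ 1 := dist_comm _ _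
      rw [this] at hz
      exact absurd hz (not_lt.mpr (min_le_right _ _))
  have := differentiableOn_tsum_of_summable_norm
    (F := fun (n : ℕ) (z : ℂ) => zterm (n + 1) z)
    (U := Metric.ball z₀ r)
    (zterm_summable_u (a := z₀.re / 2) (by linarith) (by positivity))
    (fun n => fun z hz => (zterm_differentiableAt (hball z hz).2.2).differentiableWithinAt)
    Metric.isOpen_ball
    (fun n z hz => zterm_bound (by linarith) (hball z hz).1 (hball z hz).2.1
      (hball z hz).2.2 (Nat.le_add_left 1 n))
  exact (this.differentiableAt (Metric.ball_mem_nhds z₀ hr0))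

lemma zterm_hasSum_of_one_lt {z : ℂ} (hz : 1 < z.re) :
    HasSum (fun n : ℕ => zterm n z) (riemannZeta z) := by
  have hz0 : 0 < z.re := by linarith
  have hz1 : z ≠ 1 := by
    intro h; rw [h] at hz; simp at hz
  have hw : (1 : ℂ) - z ≠ 0 := sub_ne_zero.mpr (Ne.symm hz1)
  have hsum : Summable (fun n : ℕ => zterm n z) := zterm_summable hz0 hz1
  -- part 1
  have hs1 : Summable (fun n : ℕ => 1 / ((n : ℂ) + 1) ^ z) := by
    have h0 : Summable (fun n : ℕ => 1 / (n : ℂ) ^ z) :=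
      Complex.summable_one_div_nat_cpow.mpr hz
    have := (summable_nat_add_iff 1).mpr h0
    refine this.congr fun n => ?_
    push_cast
    rfl
  have h1 : HasSum (fun n : ℕ => ((n : ℂ) + 1) ^ (-z)) (riemannZeta z) := by
    have := hs1.hasSum
    rw [← zeta_eq_tsum_one_div_nat_add_one_cpow hz] at this
    refine this.congr_fun fun n => ?_
    rw [cpow_neg, one_div]
  -- part 2 : telescoping
  have hs2 : Summable (fun n : ℕ => (((n : ℂ) + 1) ^ (1 - z) - (n : ℂ) ^ (1 - z)) / (1 - z)) := by
    have := h1.summable.sub hsum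
    refine this.congr fun n => ?_
    simp [zterm]
  have h2 : HasSum (fun n : ℕ => (((n : ℂ) + 1) ^ (1 - z) - (n : ℂ) ^ (1 - z)) / (1 - z))
      (0 : ℂ) := by
    rw [hs2.hasSum_iff_tendsto_nat]
    have hps : ∀ N : ℕ, (∑ n ∈ Finset.range N,
        ((((n : ℂ) + 1) ^ (1 - z) - (n : ℂ) ^ (1 - z)) / (1 - z)))
        = ((N : ℂ)) ^ (1 - z) / (1 - z) := by
      intro N
      have := Finset.sum_range_sub (f := fun m : ℕ => ((m : ℂ)) ^ (1 - z) / (1 - z)) N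
      simp only [Nat.cast_zero, Complex.zero_cpow hw, zero_div, sub_zero] at this
      rw [← this]
      refine Finset.sum_congr rfl fun n _ => ?_
      push_cast
      rw [sub_div]
    simp only [hps]
    rw [show (0 : ℂ) = 0 / (1 - z) by simp]
    apply Filter.Tendsto.div_const
    rw [tendsto_zero_iff_norm_tendsto_zero]
    have hb : ∀ᶠ N : ℕ in atTop, ‖((N : ℂ)) ^ (1 - z)‖ = ((N : ℝ)) ^ (1 - z.re) := by
      filter_upwards [Filter.eventually_gt_atTop 0] with N hN
      rw [show ((N : ℂ)) = (((N : ℝ) : ℂ)) by push_cast; rfl,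
        Complex.norm_cpow_eq_rpow_re_of_pos (by exact_mod_cast hN)]
      simp
    have hlim : Tendsto (fun N : ℕ => ((N : ℝ)) ^ (1 - z.re)) atTop (nhds 0) := by
      have := (tendsto_rpow_neg_atTop (y := z.re - 1) (by linarith)).comp
        tendsto_natCast_atTop_atTop (α := ℕ)
      refine this.congr fun N => ?_
      simp [neg_sub]
    exact Filter.Tendsto.congr' (hb.mono fun N h => h.symm) hlim
  have := h1.sub h2
  rw [sub_zero] at this
  exact this

lemma U_preconnected : IsPreconnected {z : ℂ | 0 < z.re ∧ z ≠ 1} := by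
  have hA : IsPreconnected {z : ℂ | 0 < z.re ∧ z.re < 1} :=
    ((convex_halfSpace_re_gt 0).inter (convex_halfSpace_re_lt 1)).isPreconnected
  have hB : IsPreconnected {z : ℂ | 0 < z.re ∧ 0 < z.im} :=
    ((convex_halfSpace_re_gt 0).inter (convex_halfSpace_im_gt 0)).isPreconnected
  have hCc : IsPreconnected {z : ℂ | 0 < z.re ∧ z.im < 0} :=
    ((convex_halfSpace_re_gt 0).inter (convex_halfSpace_im_lt 0)).isPreconnected
  have hD : IsPreconnected {z : ℂ | 1 < z.re} :=
    (convex_halfSpace_re_gt 1).isPreconnected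
  have h1 : IsPreconnected ({z : ℂ | 0 < z.re ∧ z.re < 1} ∪ {z : ℂ | 0 < z.re ∧ 0 < z.im}) := by
    apply IsPreconnected.union (Complex.mk (1/2) 1) _ _ hA hB
    · constructor <;> norm_num
    · constructor <;> norm_num
  have h2 : IsPreconnected (({z : ℂ | 0 < z.re ∧ z.re < 1} ∪ {z : ℂ | 0 < z.re ∧ 0 < z.im})
      ∪ {z : ℂ | 0 < z.re ∧ z.im < 0}) := by
    apply IsPreconnected.union (Complex.mk (1/2) (-1)) _ _ h1 hCc
    · left; constructor <;> norm_num
    · constructor <;> norm_num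
  have h3 : IsPreconnected ((({z : ℂ | 0 < z.re ∧ z.re < 1} ∪ {z : ℂ | 0 < z.re ∧ 0 < z.im})
      ∪ {z : ℂ | 0 < z.re ∧ z.im < 0}) ∪ {z : ℂ | 1 < z.re}) := by
    apply IsPreconnected.union (Complex.mk 2 1) _ _ h2 hD
    · left; right; constructor <;> norm_num
    · norm_num
  have hset : {z : ℂ | 0 < z.re ∧ z ≠ 1} =
      (({z : ℂ | 0 < z.re ∧ z.re < 1} ∪ {z : ℂ | 0 < z.re ∧ 0 < z.im})
      ∪ {z : ℂ | 0 < z.re ∧ z.im < 0}) ∪ {z : ℂ | 1 < z.re} := by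
    ext z
    simp only [Set.mem_setOf_eq, Set.mem_union]
    constructor
    · rintro ⟨hre, hne⟩
      rcases lt_trichotomy z.re 1 with h | h | h
      · exact Or.inl (Or.inl (Or.inl ⟨hre, h⟩))
      · rcases lt_trichotomy z.im 0 with h' | h' | h'
        · exact Or.inl (Or.inr ⟨hre, h'⟩)
        · exact absurd (Complex.ext h (by simpa using h')) hne
        · exact Or.inl (Or.inl (Or.inr ⟨hre, h'⟩))
      · exact Or.inr h
    · rintro (((⟨h1', h2'⟩ | ⟨h1', h2'⟩) | ⟨h1', h2'⟩) | h')
      · exact ⟨h1', fun h => by rw [h] at h2'; simp at h2'⟩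
      · exact ⟨h1', fun h => by rw [h] at h2'; simp at h2'⟩
      · exact ⟨h1', fun h => by rw [h] at h2'; simp at h2'⟩
      · refine ⟨by linarith, fun h => by rw [h] at h'; simp at h'⟩
  rw [hset]
  exact h3

lemma zterm_hasSum {z : ℂ} (hz : 0 < z.re) (hz1 : z ≠ 1) :
    HasSum (fun n : ℕ => zterm n z) (riemannZeta z) := by
  set U : Set ℂ := {z : ℂ | 0 < z.re ∧ z ≠ 1} with hU
  have hUopen : IsOpen U := by
    apply IsOpen.inter
    · exact isOpen_lt continuous_const Complex.continuous_re
    · exact isOpen_compl_singleton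
  set G : ℂ → ℂ := fun z => ∑' n : ℕ, zterm (n + 1) z with hG
  set Z : ℂ → ℂ := fun z => riemannZeta z - zterm 0 z with hZ
  have hzterm0 : ∀ w : ℂ, w ≠ 1 → zterm 0 w = 1 - 1 / (1 - w) := by
    intro w hw
    have : (1 : ℂ) - w ≠ 0 := sub_ne_zero.mpr (Ne.symm hw)
    simp [zterm, Complex.zero_cpow this, Complex.one_cpow]
  have hGanal : AnalyticOnNhd ℂ G U := by
    refine DifferentiableOn.analyticOnNhd (fun w hw => ?_) hUopen
    exact (zterm_tail_diffAt hw.1 hw.2).differentiableWithinAt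
  have hZanal : AnalyticOnNhd ℂ Z U := by
    refine DifferentiableOn.analyticOnNhd (fun w hw => ?_) hUopen
    refine DifferentiableAt.differentiableWithinAt ?_
    refine (differentiableAt_riemannZeta hw.2).sub ?_
    have hdiff : DifferentiableAt ℂ (fun u : ℂ => 1 - 1 / (1 - u)) w := by
      refine (differentiableAt_const _).sub ?_
      refine (differentiableAt_const _).div ?_ (sub_ne_zero.mpr (Ne.symm hw.2))
      exact (differentiableAt_const _).sub differentiableAt_id
    refine hdiff.congr_of_eventuallyEq ?_
    filter_upwards [isOpen_compl_singleton.mem_nhds (by simpa using hw.2 :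
      w ∈ ({1} : Set ℂ)ᶜ)] with u hu
    exact hzterm0 u hu
  have heq : Set.EqOn G Z U := by
    apply AnalyticOnNhd.eqOn_of_preconnected_of_eventuallyEq hGanal hZanal U_preconnected
      (z₀ := (2 : ℂ)) (by constructor <;> norm_num)
    have hopen2 : {w : ℂ | 1 < w.re} ∈ nhds (2 : ℂ) := by
      refine (isOpen_lt continuous_const Complex.continuous_re).mem_nhds ?_
      norm_num
    filter_upwards [hopen2] with w hw
    have hw1 : w ≠ 1 := by
      intro h; rw [h] at hw; simp at hw
    have hhas := zterm_hasSum_of_one_lt hw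
    have hsum := hhas.summable
    have htsum := hhas.tsum_eq
    have hsplit : ∑' n : ℕ, zterm n w = zterm 0 w + ∑' n : ℕ, zterm (n + 1) w :=
      hsum.tsum_eq_zero_add
    simp only [hG, hZ]
    rw [← htsum, hsplit]
    ring
  have hzU : z ∈ U := ⟨hz, hz1⟩
  have hsum := zterm_summable hz hz1
  have hhas := hsum.hasSum
  have hsplit : ∑' n : ℕ, zterm n z = zterm 0 z + ∑' n : ℕ, zterm (n + 1) z :=
    hsum.tsum_eq_zero_add
  have : ∑' n : ℕ, zterm n z = riemannZeta z := by
    rw [hsplit]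
    have := heq hzU
    simp only [hG, hZ] at this
    rw [this]
    ring
  rwa [this] at hhas


/-- For every real `s ∈ (0,1)`, the series
`∑_{n=1}^∞ ( n^{−s} − (n^{1−s} − (n−1)^{1−s})/(1−s) )` converges and its sum equals
`ζ(s)`, the analytic continuation of the Riemann zeta function evaluated at `s`. -/
theorem zeta_series_representation (s : ℝ) (hs0 : 0 < s) (hs1 : s < 1) :
    ∃ S : ℝ, HasSum (fun n : ℕ =>
        ((n : ℝ) + 1) ^ (-s) -
          (((n : ℝ) + 1) ^ (1 - s) - (n : ℝ) ^ (1 - s)) / (1 - s)) S ∧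
      (S : ℂ) = riemannZeta (s : ℂ) := by
  have hz : 0 < ((s : ℂ)).re := by simpa using hs0
  have hz1 : (s : ℂ) ≠ 1 := by
    intro h
    have := congrArg Complex.re h
    simp at this
    linarith
  have hhas := zterm_hasSum hz hz1
  have hterm : ∀ n : ℕ, zterm n (s : ℂ) =
      ((((n : ℝ) + 1) ^ (-s) -
        (((n : ℝ) + 1) ^ (1 - s) - (n : ℝ) ^ (1 - s)) / (1 - s) : ℝ) : ℂ) := by
    intro n
    have h1 : (0 : ℝ) ≤ (n : ℝ) + 1 := by positivity
    have h2 : (0 : ℝ) ≤ (n : ℝ) := Nat.cast_nonneg n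
    rw [Complex.ofReal_sub, Complex.ofReal_div, Complex.ofReal_sub,
      Complex.ofReal_cpow h1, Complex.ofReal_cpow h1, Complex.ofReal_cpow h2]
    simp only [zterm]
    push_cast
    ring_nf
  have hhas' : HasSum (fun n : ℕ =>
      ((((n : ℝ) + 1) ^ (-s) -
        (((n : ℝ) + 1) ^ (1 - s) - (n : ℝ) ^ (1 - s)) / (1 - s) : ℝ) : ℂ))
      (riemannZeta (s : ℂ)) := by
    exact hhas.congr_fun fun n => (hterm n).symm
  rw [Complex.hasSum_iff] at hhas'
  obtain ⟨hre, him⟩ := hhas'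
  have him0 : (riemannZeta (s : ℂ)).im = 0 := by
    have : HasSum (fun _ : ℕ => (0 : ℝ)) (riemannZeta (s : ℂ)).im :=
      him.congr_fun fun n => (Complex.ofReal_im _).symm
    exact this.unique hasSum_zero
  refine ⟨(riemannZeta (s : ℂ)).re, ?_, ?_⟩
  · exact hre.congr_fun fun n => (Complex.ofReal_re _).symm
  · apply Complex.ext
    · simp
    · simp [him0]
end

section
/- Let p>0, α∈(1,2) with α<1+p, σ>0, T>0, and let Q̃ be a Borel probability measure on (0,∞) with ∫_{(0,∞)} v^{(α−1)/p} dQ̃(v) < ∞. Then the drift correction of the series representation satisfies ∫_0^∞ ∫_{(0,∞)} ∫_0^∞ ∫_0^1 [ (αs/(σT))^{−1/α} − min( (αs/(σT))^{−1/α} , r^{1/p} u^{1/α} v^{−1/p} ) ] du · e^{−r} dr · dQ̃(v) · ds = (σT/(α−1)) · Γ((1+p−α)/p) · ∫_{(0,∞)} v^{(α−1)/p} dQ̃(v), where Γ is the Gamma function; in particular the left-hand side is finite. -/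
open MeasureTheory

section helpers
open Set
open scoped ENNReal


lemma lemA {α σ T x : ℝ} (hα1 : 1 < α) (hσ : 0 < σ) (hT : 0 < T) (hx : 0 < x) :
    (∫⁻ s in Ioi (0:ℝ), ENNReal.ofReal
        ((α * s / (σ * T)) ^ (-1 / α) - min ((α * s / (σ * T)) ^ (-1 / α)) x))
      = ENNReal.ofReal (σ * T / (α * (α - 1)) * x ^ (1 - α)) := by
  have hα0 : (0:ℝ) < α := by linarith
  have hα1' : (0:ℝ) < α - 1 := by linarith
  set K : ℝ := σ * T / α with hKdef
  have hK : 0 < K := by positivity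
  have hxa : 0 < x ^ (-α) := Real.rpow_pos_of_pos hx _
  set s₀ : ℝ := K * x ^ (-α) with hs₀def
  have hs₀ : 0 < s₀ := by positivity
  have hxα : 0 < x ^ α := Real.rpow_pos_of_pos hx _
  have hexp : (-1:ℝ) < -1 / α := by
    rw [neg_div]
    have : 1 / α < 1 := by rw [div_lt_one hα0]; exact hα1
    linarith
  -- rewrite the integrand
  have hc : ∀ s : ℝ, 0 < s → (α * s / (σ * T)) ^ (-1 / α) = (K / s) ^ (1 / α) := by
    intro s hs
    have h1 : α * s / (σ * T) = (K / s)⁻¹ := by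
      rw [hKdef]; field_simp
    have hKs : (0:ℝ) ≤ K / s := by positivity
    rw [h1, Real.inv_rpow hKs, neg_div, Real.rpow_neg hKs, inv_inv]
  have hc' : ∀ s : ℝ, 0 < s → (K / s) ^ (1 / α) = K ^ (1 / α) * s ^ (-1 / α) := by
    intro s hs
    rw [Real.div_rpow hK.le hs.le, neg_div, Real.rpow_neg hs.le, div_eq_mul_inv]
  have hcmp : ∀ s : ℝ, 0 < s → (x ≤ (K / s) ^ (1 / α) ↔ s ≤ s₀) := by
    intro s hs
    have hx' : x = (x ^ α) ^ (1 / α) := by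
      rw [← Real.rpow_mul hx.le, mul_one_div, div_self hα0.ne', Real.rpow_one]
    constructor
    · intro h
      rw [hx'] at h
      have h2 : x ^ α ≤ K / s :=
        (Real.rpow_le_rpow_iff hxα.le (by positivity) (by positivity)).mp h
      rw [le_div_iff₀ hs] at h2
      rw [hs₀def, Real.rpow_neg hx.le, ← div_eq_mul_inv, le_div_iff₀ hxα]
      nlinarith
    · intro h
      rw [hx']
      refine (Real.rpow_le_rpow_iff hxα.le (by positivity) (by positivity)).mpr ?_
      rw [le_div_iff₀ hs]
      rw [hs₀def, Real.rpow_neg hx.le, ← div_eq_mul_inv, le_div_iff₀ hxα] at h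
      nlinarith
  have hsplit : Ioi (0:ℝ) = Ioc 0 s₀ ∪ Ioi s₀ := (Ioc_union_Ioi_eq_Ioi hs₀.le).symm
  rw [hsplit, lintegral_union measurableSet_Ioi (Ioc_disjoint_Ioi le_rfl)]
  have h2 : (∫⁻ s in Ioi s₀, ENNReal.ofReal
      ((α * s / (σ * T)) ^ (-1 / α) - min ((α * s / (σ * T)) ^ (-1 / α)) x)) = 0 := by
    have hz : ∀ s ∈ Ioi s₀, ENNReal.ofReal
        ((α * s / (σ * T)) ^ (-1 / α) - min ((α * s / (σ * T)) ^ (-1 / α)) x) = (0:ℝ≥0∞) := by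
      intro s hs
      have hs' : 0 < s := lt_trans hs₀ hs
      have hle : (α * s / (σ * T)) ^ (-1 / α) ≤ x := by
        rw [hc s hs']
        by_contra hcon
        push_neg at hcon
        exact absurd ((hcmp s hs').mp hcon.le) (not_le.mpr (mem_Ioi.mp hs))
      rw [min_eq_left hle, sub_self, ENNReal.ofReal_zero]
    rw [setLIntegral_congr_fun measurableSet_Ioi hz, lintegral_zero]
  rw [h2, add_zero]
  -- first piece
  have hcong : ∀ s ∈ Ioc (0:ℝ) s₀, ENNReal.ofReal
      ((α * s / (σ * T)) ^ (-1 / α) - min ((α * s / (σ * T)) ^ (-1 / α)) x)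
      = ENNReal.ofReal (K ^ (1 / α) * s ^ (-1 / α) - x) := by
    intro s hs
    have hxle : x ≤ (α * s / (σ * T)) ^ (-1 / α) := by
      rw [hc s hs.1]; exact (hcmp s hs.1).mpr hs.2
    rw [min_eq_right hxle, hc s hs.1, hc' s hs.1]
  rw [setLIntegral_congr_fun measurableSet_Ioc hcong]
  have hi1 : IntegrableOn (fun s : ℝ => s ^ (-1 / α)) (Ioc 0 s₀) := by
    have := intervalIntegral.intervalIntegrable_rpow' (a := 0) (b := s₀) hexp
    rwa [intervalIntegrable_iff_integrableOn_Ioc_of_le hs₀.le] at this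
  have hi : IntegrableOn (fun s : ℝ => K ^ (1 / α) * s ^ (-1 / α) - x) (Ioc 0 s₀) := by
    exact (hi1.const_mul _).sub (integrableOn_const measure_Ioc_lt_top.ne)
  have hnn : 0 ≤ᵐ[volume.restrict (Ioc 0 s₀)] fun s : ℝ => K ^ (1 / α) * s ^ (-1 / α) - x := by
    refine (ae_restrict_iff' measurableSet_Ioc).2 (Filter.Eventually.of_forall fun s hs => ?_)
    have := (hcmp s hs.1).mpr hs.2
    rw [hc' s hs.1] at this
    exact sub_nonneg.2 this
  rw [← ofReal_integral_eq_lintegral_ofReal hi hnn]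
  congr 1
  have he : -1 / α + 1 = (α - 1) / α := by field_simp; ring
  have hval : (∫ s in Ioc 0 s₀, (K ^ (1 / α) * s ^ (-1 / α) - x))
      = K ^ (1 / α) * (s₀ ^ (-1 / α + 1) / (-1 / α + 1)) - s₀ * x := by
    rw [← intervalIntegral.integral_of_le hs₀.le,
      intervalIntegral.integral_sub ((intervalIntegral.intervalIntegrable_rpow' hexp).const_mul _)
        intervalIntegrable_const,
      intervalIntegral.integral_const_mul, integral_rpow (Or.inl hexp),
      intervalIntegral.integral_const]
    rw [Real.zero_rpow (by rw [he]; positivity : -1 / α + 1 ≠ 0)]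
    simp [smul_eq_mul]
  rw [hval]
  have h1 : s₀ ^ (-1 / α + 1) = K ^ ((α - 1) / α) * x ^ (1 - α) := by
    have harg : -α * ((α - 1) / α) = 1 - α := by field_simp; ring
    rw [he, hs₀def, Real.mul_rpow hK.le hxa.le, ← Real.rpow_mul hx.le, harg]
  have h2' : K ^ (1 / α) * K ^ ((α - 1) / α) = K := by
    rw [← Real.rpow_add hK]
    have : 1 / α + (α - 1) / α = 1 := by field_simp; ring
    rw [this, Real.rpow_one]
  have h3 : s₀ * x = K * x ^ (1 - α) := by
    rw [hs₀def, mul_assoc]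
    congr 1
    rw [← Real.rpow_add_one hx.ne' (-α)]
    congr 1
    ring
  rw [h1, h3, ← mul_div_assoc, ← mul_assoc, h2']
  rw [hKdef]
  field_simp [hα0.ne', (by linarith : α - 1 ≠ 0), (by linarith : -1 + α ≠ 0)]
  ring

lemma lemB {α c : ℝ} (hα1 : 1 < α) (hc : 0 ≤ c) :
    (∫⁻ u in Ioo (0:ℝ) 1, ENNReal.ofReal (c * u ^ ((1 - α) / α)))
      = ENNReal.ofReal (c * α) := by
  have hα0 : (0:ℝ) < α := by linarith
  have hβ : (-1:ℝ) < (1 - α) / α := by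
    rw [lt_div_iff₀ hα0]; linarith
  rw [Measure.restrict_congr_set Ioo_ae_eq_Ioc]
  have hi : IntegrableOn (fun u : ℝ => c * u ^ ((1 - α) / α)) (Ioc 0 1) := by
    have := (intervalIntegral.intervalIntegrable_rpow' (a := 0) (b := 1) hβ).const_mul c
    rwa [intervalIntegrable_iff_integrableOn_Ioc_of_le zero_le_one] at this
  have hnn : 0 ≤ᵐ[volume.restrict (Ioc 0 1)] fun u : ℝ => c * u ^ ((1 - α) / α) := by
    refine (ae_restrict_iff' measurableSet_Ioc).2 (Filter.Eventually.of_forall fun u hu => ?_)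
    exact mul_nonneg hc (Real.rpow_nonneg hu.1.le _)
  rw [← ofReal_integral_eq_lintegral_ofReal hi hnn]
  congr 1
  have he : (1 - α) / α + 1 = 1 / α := by field_simp; ring
  rw [← intervalIntegral.integral_of_le zero_le_one,
    intervalIntegral.integral_const_mul, integral_rpow (Or.inl hβ),
    Real.one_rpow, Real.zero_rpow (by rw [he]; positivity), he]
  field_simp
  ring

lemma lemC {t c : ℝ} (ht : 0 < t) (hc : 0 ≤ c) :
    (∫⁻ r in Ioi (0:ℝ),
        ENNReal.ofReal (c * r ^ (t - 1)) * ENNReal.ofReal (Real.exp (-r)))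
      = ENNReal.ofReal (c * Real.Gamma t) := by
  have hcong : ∀ r ∈ Ioi (0:ℝ),
      ENNReal.ofReal (c * r ^ (t - 1)) * ENNReal.ofReal (Real.exp (-r))
        = ENNReal.ofReal (c * (Real.exp (-r) * r ^ (t - 1))) := by
    intro r hr
    rw [← ENNReal.ofReal_mul (mul_nonneg hc (Real.rpow_nonneg (le_of_lt hr) _))]
    congr 1
    ring
  rw [setLIntegral_congr_fun measurableSet_Ioi hcong]
  have hi : IntegrableOn (fun r : ℝ => c * (Real.exp (-r) * r ^ (t - 1))) (Ioi 0) :=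
    (Real.GammaIntegral_convergent ht).const_mul c
  have hnn : 0 ≤ᵐ[volume.restrict (Ioi 0)] fun r : ℝ => c * (Real.exp (-r) * r ^ (t - 1)) := by
    refine (ae_restrict_iff' measurableSet_Ioi).2 (Filter.Eventually.of_forall fun r hr => ?_)
    exact mul_nonneg hc (mul_nonneg (Real.exp_nonneg _) (Real.rpow_nonneg (le_of_lt hr) _))
  rw [← ofReal_integral_eq_lintegral_ofReal hi hnn]
  congr 1
  rw [integral_const_mul, ← Real.Gamma_eq_integral ht]


/-- For `p>0`, `α ∈ (1,2)` with `α < 1+p`, `σ>0`, `T>0` and a Borel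
probability measure `Q̃` on `(0,∞)` with `∫ v^{(α−1)/p} dQ̃(v) < ∞`, the drift correction
of the series representation satisfies
`∫_0^∞ ∫_{(0,∞)} ∫_0^∞ ∫_0^1 [ (αs/(σT))^{−1/α} − min((αs/(σT))^{−1/α}, r^{1/p} u^{1/α} v^{−1/p}) ]
  du e^{−r} dr dQ̃(v) ds = (σT/(α−1)) Γ((1+p−α)/p) ∫ v^{(α−1)/p} dQ̃(v)`;
in particular (the integrand being nonnegative) the left-hand side is finite.
This is expressed via the Lebesgue (lower) integral of the nonnegative integrand. -/
theorem drift_correction_identity (p α σ T : ℝ) (hp : 0 < p) (hα : α ∈ Set.Ioo (1:ℝ) 2)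
    (hαp : α < 1 + p) (hσ : 0 < σ) (hT : 0 < T)
    (Q : Measure ℝ) [IsProbabilityMeasure Q] (hQ : Q (Set.Iic 0) = 0)
    (hint : Integrable (fun v : ℝ => v ^ ((α - 1) / p)) Q) :
    (∫⁻ s in Set.Ioi (0:ℝ),
      ∫⁻ v, (∫⁻ r in Set.Ioi (0:ℝ),
        (∫⁻ u in Set.Ioo (0:ℝ) 1,
          ENNReal.ofReal
            ((α * s / (σ * T)) ^ (-1 / α) -
              min ((α * s / (σ * T)) ^ (-1 / α))
                (r ^ (1 / p) * u ^ (1 / α) * v ^ (-1 / p)))) *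
          ENNReal.ofReal (Real.exp (-r))) ∂Q) =
      ENNReal.ofReal
        (σ * T / (α - 1) * Real.Gamma ((1 + p - α) / p) *
          ∫ v, v ^ ((α - 1) / p) ∂Q) := by
  obtain ⟨hα1, hα2⟩ := hα
  have hα0 : (0:ℝ) < α := by linarith
  have hα1' : (0:ℝ) < α - 1 := by linarith
  have ht : 0 < (1 + p - α) / p := div_pos (by linarith) hp
  have hQae : ∀ᵐ v ∂Q, 0 < v := by
    rw [ae_iff]
    convert hQ using 2
    ext v; simp [not_lt]
  -- measurability facts
  have hm1 : AEMeasurable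
      (Function.uncurry fun s v : ℝ =>
        ∫⁻ r in Ioi (0:ℝ),
          (∫⁻ u in Ioo (0:ℝ) 1,
            ENNReal.ofReal
              ((α * s / (σ * T)) ^ (-1 / α) -
                min ((α * s / (σ * T)) ^ (-1 / α))
                  (r ^ (1 / p) * u ^ (1 / α) * v ^ (-1 / p)))) *
            ENNReal.ofReal (Real.exp (-r)))
      ((volume.restrict (Ioi 0)).prod Q) := by
    apply Measurable.aemeasurable
    apply Measurable.lintegral_prod_right'
      (f := fun w : (ℝ × ℝ) × ℝ =>
        (∫⁻ u in Ioo (0:ℝ) 1,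
          ENNReal.ofReal
            ((α * w.1.1 / (σ * T)) ^ (-1 / α) -
              min ((α * w.1.1 / (σ * T)) ^ (-1 / α))
                (w.2 ^ (1 / p) * u ^ (1 / α) * w.1.2 ^ (-1 / p)))) *
          ENNReal.ofReal (Real.exp (-w.2)))
    refine Measurable.mul ?_ (by fun_prop)
    apply Measurable.lintegral_prod_right'
      (f := fun y : ((ℝ × ℝ) × ℝ) × ℝ =>
        ENNReal.ofReal
          ((α * y.1.1.1 / (σ * T)) ^ (-1 / α) -
            min ((α * y.1.1.1 / (σ * T)) ^ (-1 / α))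
              (y.1.2 ^ (1 / p) * y.2 ^ (1 / α) * y.1.1.2 ^ (-1 / p))))
    fun_prop
  have hm2 : ∀ v : ℝ, AEMeasurable
      (Function.uncurry fun s r : ℝ =>
        (∫⁻ u in Ioo (0:ℝ) 1,
          ENNReal.ofReal
            ((α * s / (σ * T)) ^ (-1 / α) -
              min ((α * s / (σ * T)) ^ (-1 / α))
                (r ^ (1 / p) * u ^ (1 / α) * v ^ (-1 / p)))) *
          ENNReal.ofReal (Real.exp (-r)))
      ((volume.restrict (Ioi 0)).prod (volume.restrict (Ioi 0))) := by
    intro v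
    apply Measurable.aemeasurable
    refine Measurable.mul ?_ (by fun_prop)
    apply Measurable.lintegral_prod_right'
      (f := fun y : (ℝ × ℝ) × ℝ =>
        ENNReal.ofReal
          ((α * y.1.1 / (σ * T)) ^ (-1 / α) -
            min ((α * y.1.1 / (σ * T)) ^ (-1 / α))
              (y.1.2 ^ (1 / p) * y.2 ^ (1 / α) * v ^ (-1 / p))))
    fun_prop
  have hm3 : ∀ v r : ℝ, AEMeasurable
      (Function.uncurry fun s u : ℝ =>
        ENNReal.ofReal
          ((α * s / (σ * T)) ^ (-1 / α) -
            min ((α * s / (σ * T)) ^ (-1 / α))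
              (r ^ (1 / p) * u ^ (1 / α) * v ^ (-1 / p))))
      ((volume.restrict (Ioi 0)).prod (volume.restrict (Ioo 0 1))) := by
    intro v r
    apply Measurable.aemeasurable
    fun_prop
  -- the key computation for fixed v > 0
  have hv : ∀ v : ℝ, 0 < v →
      (∫⁻ s in Ioi (0:ℝ),
        ∫⁻ r in Ioi (0:ℝ),
          (∫⁻ u in Ioo (0:ℝ) 1,
            ENNReal.ofReal
              ((α * s / (σ * T)) ^ (-1 / α) -
                min ((α * s / (σ * T)) ^ (-1 / α))
                  (r ^ (1 / p) * u ^ (1 / α) * v ^ (-1 / p)))) *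
            ENNReal.ofReal (Real.exp (-r)))
      = ENNReal.ofReal
          (σ * T / (α - 1) * Real.Gamma ((1 + p - α) / p) * v ^ ((α - 1) / p)) := by
    intro v hv0
    refine (lintegral_lintegral_swap (hm2 v)).trans ?_
    have hr : ∀ r ∈ Ioi (0:ℝ),
        (∫⁻ s in Ioi (0:ℝ),
          (∫⁻ u in Ioo (0:ℝ) 1,
            ENNReal.ofReal
              ((α * s / (σ * T)) ^ (-1 / α) -
                min ((α * s / (σ * T)) ^ (-1 / α))
                  (r ^ (1 / p) * u ^ (1 / α) * v ^ (-1 / p)))) *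
            ENNReal.ofReal (Real.exp (-r)))
        = ENNReal.ofReal
            (σ * T / (α * (α - 1)) * α * v ^ ((α - 1) / p) * r ^ ((1 + p - α) / p - 1)) *
            ENNReal.ofReal (Real.exp (-r)) := by
      intro r hr0
      have hr0' : (0:ℝ) < r := hr0
      rw [lintegral_mul_const' _ _ ENNReal.ofReal_ne_top]
      congr 1
      refine (lintegral_lintegral_swap (hm3 v r)).trans ?_
      have hu : ∀ u ∈ Ioo (0:ℝ) 1,
          (∫⁻ s in Ioi (0:ℝ),
            ENNReal.ofReal
              ((α * s / (σ * T)) ^ (-1 / α) -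
                min ((α * s / (σ * T)) ^ (-1 / α))
                  (r ^ (1 / p) * u ^ (1 / α) * v ^ (-1 / p))))
          = ENNReal.ofReal
              ((σ * T / (α * (α - 1)) * v ^ ((α - 1) / p) * r ^ ((1 + p - α) / p - 1)) *
                u ^ ((1 - α) / α)) := by
        intro u hu0
        have hu0' : (0:ℝ) < u := hu0.1
        have hx : 0 < r ^ (1 / p) * u ^ (1 / α) * v ^ (-1 / p) := by positivity
        rw [lemA hα1 hσ hT hx]
        congr 1
        have h1 : (r ^ (1 / p) * u ^ (1 / α) * v ^ (-1 / p)) ^ (1 - α)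
            = r ^ ((1 - α) / p) * u ^ ((1 - α) / α) * v ^ ((α - 1) / p) := by
          rw [Real.mul_rpow (by positivity) (by positivity),
            Real.mul_rpow (by positivity) (by positivity),
            ← Real.rpow_mul hr0'.le, ← Real.rpow_mul hu0'.le, ← Real.rpow_mul hv0.le]
          rw [show 1 / p * (1 - α) = (1 - α) / p by ring,
            show 1 / α * (1 - α) = (1 - α) / α by ring,
            show -1 / p * (1 - α) = (α - 1) / p by ring]
        have h2 : (1 + p - α) / p - 1 = (1 - α) / p := by
          field_simp
          ring
        rw [h1, h2]
        ring
      refine (setLIntegral_congr_fun measurableSet_Ioo hu).trans ?_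
      rw [lemB hα1 (by positivity)]
      congr 1
      ring
    refine (setLIntegral_congr_fun measurableSet_Ioi hr).trans ?_
    rw [lemC ht (by positivity)]
    congr 1
    field_simp
  refine (lintegral_lintegral_swap hm1).trans ?_
  refine (lintegral_congr_ae (hQae.mono fun v hv0 => hv v hv0)).trans ?_
  have hC2 : 0 ≤ σ * T / (α - 1) * Real.Gamma ((1 + p - α) / p) :=
    mul_nonneg (by positivity) (Real.Gamma_nonneg_of_nonneg ht.le)
  refine (lintegral_congr_ae (hQae.mono fun v hv0 => ENNReal.ofReal_mul hC2)).trans ?_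
  rw [lintegral_const_mul' _ _ ENNReal.ofReal_ne_top]
  rw [← ofReal_integral_eq_lintegral_ofReal hint
    (hQae.mono fun v hv0 => Real.rpow_nonneg hv0.le _)]
  rw [← ENNReal.ofReal_mul hC2]


end helpers
end

section
/- Let α∈(0,1), p>0, δ>0, λ>0. For n≥1 define σ_n^2 = ∫_0^∞ z^2 ( 1 − min(nαz^α/δ, 1) ) δ e^{−(λz)^p} z^{−1−α} dz, the variance of the jumps discarded by the truncation of the pTSS Lévy measure. Then σ_n^2 > 0 for every n, and the Asmussen–Rosiński condition holds: for every c>0, (1/σ_n^2) ∫_{ { z>0 : z^2 > c σ_n^2 } } z^2 ( 1 − min(nαz^α/δ, 1) ) δ e^{−(λz)^p} z^{−1−α} dz → 0 as n→∞. -/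
open MeasureTheory Filter Set

noncomputable def auxF (α p δ lam : ℝ) (n : ℕ) (z : ℝ) : ℝ :=
  z ^ 2 * (1 - min ((n : ℝ) * α * z ^ α / δ) 1) *
    (δ * Real.exp (-(lam * z) ^ p) * z ^ (-1 - α))

lemma aux_integral_rpow {r a : ℝ} (hr : -1 < r) (ha : 0 ≤ a) :
    ∫ z in Set.Ioc (0:ℝ) a, z ^ r = a ^ (r+1) / (r+1) := by
  rw [← intervalIntegral.integral_of_le ha, integral_rpow (Or.inl hr),
    Real.zero_rpow (by linarith : r+1 ≠ 0)]
  ring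

lemma aux_intOn_rpow {r a : ℝ} (hr : -1 < r) (ha : 0 ≤ a) :
    MeasureTheory.IntegrableOn (fun z : ℝ => z ^ r) (Set.Ioc 0 a) := by
  have h := intervalIntegral.intervalIntegrable_rpow' (a := (0:ℝ)) (b := a) hr
  rwa [intervalIntegrable_iff_integrableOn_Ioc_of_le ha] at h

variable {α p δ lam : ℝ}

lemma auxF_form (n : ℕ) {z : ℝ} (hz : 0 < z) :
    auxF α p δ lam n z =
      δ * ((1 - min ((n : ℝ) * α * z ^ α / δ) 1) * Real.exp (-(lam * z) ^ p)) * z ^ (1 - α) := by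
  have h2 : z ^ (1 - α) = z ^ (2:ℕ) * z ^ (-1 - α) := by
    rw [← Real.rpow_natCast z 2, ← Real.rpow_add hz]
    congr 1
    push_cast
    ring
  simp only [auxF, h2]
  ring

lemma auxF_nonneg (hα : α ∈ Set.Ioo (0:ℝ) 1) (hδ : 0 < δ) (n : ℕ) {z : ℝ} (hz : 0 < z) :
    0 ≤ auxF α p δ lam n z := by
  rw [auxF_form n hz]
  have h1 : min ((n:ℝ) * α * z ^ α / δ) 1 ≤ 1 := min_le_right _ _
  have h2 : 0 ≤ Real.exp (-(lam * z) ^ p) := Real.exp_nonneg _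
  have h3 : 0 ≤ z ^ (1 - α) := Real.rpow_nonneg hz.le _
  have h4 : (0:ℝ) ≤ 1 - min ((n:ℝ) * α * z ^ α / δ) 1 := by linarith
  positivity

lemma auxF_le (hα : α ∈ Set.Ioo (0:ℝ) 1) (hδ : 0 < δ) (hlam : 0 < lam) (n : ℕ) {z : ℝ}
    (hz : 0 < z) : auxF α p δ lam n z ≤ δ * z ^ (1 - α) := by
  rw [auxF_form n hz]
  have hm0 : (0:ℝ) ≤ min ((n:ℝ) * α * z ^ α / δ) 1 :=
    le_min (div_nonneg (mul_nonneg (mul_nonneg n.cast_nonneg hα.1.le)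
      (Real.rpow_nonneg hz.le _)) hδ.le) zero_le_one
  have he1 : Real.exp (-(lam * z) ^ p) ≤ 1 := by
    rw [Real.exp_le_one_iff]
    have : (0:ℝ) ≤ (lam * z) ^ p := Real.rpow_nonneg (by positivity) _
    linarith
  have he0 : 0 ≤ Real.exp (-(lam * z) ^ p) := Real.exp_nonneg _
  have hzp : 0 ≤ z ^ (1 - α) := Real.rpow_nonneg hz.le _
  have h1 : (1 - min ((n:ℝ) * α * z ^ α / δ) 1) * Real.exp (-(lam * z) ^ p) ≤ 1 := by
    nlinarith
  calc δ * ((1 - min ((n:ℝ) * α * z ^ α / δ) 1) * Real.exp (-(lam * z) ^ p)) * z ^ (1 - α)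
      ≤ δ * 1 * z ^ (1 - α) :=
        mul_le_mul_of_nonneg_right (mul_le_mul_of_nonneg_left h1 hδ.le) hzp
    _ = δ * z ^ (1 - α) := by ring

lemma auxF_eq_zero (hα : α ∈ Set.Ioo (0:ℝ) 1) (hδ : 0 < δ) {n : ℕ} (hn : 1 ≤ n) {z : ℝ}
    (hz : (δ / (n * α)) ^ (1/α) ≤ z) : auxF α p δ lam n z = 0 := by
  have hαpos := hα.1
  have hnpos : (0:ℝ) < n := by exact_mod_cast hn
  have ht : 0 < δ / (n * α) := div_pos hδ (mul_pos hnpos hαpos)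
  have hApos : 0 < (δ / (n * α)) ^ (1/α) := Real.rpow_pos_of_pos ht _
  have hz0 : 0 < z := lt_of_lt_of_le hApos hz
  have h1 : δ / (n * α) ≤ z ^ α := by
    calc δ / (n * α) = ((δ / (n * α)) ^ (1/α)) ^ α := by
          rw [← Real.rpow_mul ht.le, one_div_mul_cancel (ne_of_gt hαpos), Real.rpow_one]
      _ ≤ z ^ α := Real.rpow_le_rpow hApos.le hz hαpos.le
  have h2 : (1:ℝ) ≤ (n:ℝ) * α * z ^ α / δ := by
    rw [le_div_iff₀ hδ, one_mul]
    calc δ = (n * α) * (δ / (n * α)) := by field_simp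
      _ ≤ (n:ℝ) * α * z ^ α :=
          mul_le_mul_of_nonneg_left h1 (mul_nonneg hnpos.le hαpos.le)
  unfold auxF
  rw [min_eq_right h2]
  ring

example : True := trivial

lemma auxF_measurable (n : ℕ) : Measurable (auxF α p δ lam n) := by
  unfold auxF; fun_prop

lemma auxF_intOn_Ioc (hα : α ∈ Set.Ioo (0:ℝ) 1) (hδ : 0 < δ) (hlam : 0 < lam) (n : ℕ)
    {b : ℝ} (hb : 0 ≤ b) : IntegrableOn (auxF α p δ lam n) (Set.Ioc 0 b) := by
  have hint : IntegrableOn (fun z : ℝ => δ * z ^ (1-α)) (Set.Ioc 0 b) :=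
    (aux_intOn_rpow (by linarith [hα.2]) hb).const_mul δ
  refine hint.mono' ((auxF_measurable n).aestronglyMeasurable.restrict) ?_
  rw [ae_restrict_iff' measurableSet_Ioc]
  exact ae_of_all _ fun z hz => by
    rw [Real.norm_eq_abs, abs_of_nonneg (auxF_nonneg hα hδ n hz.1)]
    exact auxF_le hα hδ hlam n hz.1

lemma sq_auxF_intOn_Ioc (hα : α ∈ Set.Ioo (0:ℝ) 1) (hδ : 0 < δ) (hlam : 0 < lam) (n : ℕ)
    {b : ℝ} (hb : 0 ≤ b) :
    IntegrableOn (fun z => z ^ 2 * auxF α p δ lam n z) (Set.Ioc 0 b) := by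
  have hint : IntegrableOn (fun z : ℝ => (b ^ 2 * δ) * z ^ (1-α)) (Set.Ioc 0 b) :=
    (aux_intOn_rpow (by linarith [hα.2]) hb).const_mul _
  refine hint.mono' (((measurable_id.pow_const 2).mul (auxF_measurable n)).aestronglyMeasurable.restrict) ?_
  rw [ae_restrict_iff' measurableSet_Ioc]
  refine ae_of_all _ fun z hz => ?_
  have h0 := auxF_nonneg (p := p) (lam := lam) hα hδ n hz.1
  rw [Real.norm_eq_abs, abs_of_nonneg (mul_nonneg (sq_nonneg z) h0)]
  calc z ^ 2 * auxF α p δ lam n z ≤ b ^ 2 * (δ * z ^ (1-α)) :=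
        mul_le_mul (pow_le_pow_left₀ hz.1.le hz.2 2) (auxF_le hα hδ hlam n hz.1) h0 (by positivity)
    _ = (b ^ 2 * δ) * z ^ (1-α) := by ring

lemma auxF_intOn_Ioi (hα : α ∈ Set.Ioo (0:ℝ) 1) (hδ : 0 < δ) (hlam : 0 < lam) {n : ℕ}
    (hn : 1 ≤ n) : IntegrableOn (auxF α p δ lam n) (Set.Ioi 0) := by
  have hnpos : (0:ℝ) < n := by exact_mod_cast hn
  have ht : 0 < δ / (n * α) := div_pos hδ (mul_pos hnpos hα.1)
  have hA : 0 < (δ / (n * α)) ^ (1/α) := Real.rpow_pos_of_pos ht _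
  rw [← Set.Ioc_union_Ioi_eq_Ioi hA.le]
  refine (auxF_intOn_Ioc hα hδ hlam n hA.le).union ?_
  exact (integrableOn_congr_fun
    (fun z hz => auxF_eq_zero hα hδ hn (le_of_lt hz)) measurableSet_Ioi).2
    (integrableOn_zero)

lemma sq_auxF_intOn_Ioi (hα : α ∈ Set.Ioo (0:ℝ) 1) (hδ : 0 < δ) (hlam : 0 < lam) {n : ℕ}
    (hn : 1 ≤ n) : IntegrableOn (fun z => z ^ 2 * auxF α p δ lam n z) (Set.Ioi 0) := by
  have hnpos : (0:ℝ) < n := by exact_mod_cast hn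
  have ht : 0 < δ / (n * α) := div_pos hδ (mul_pos hnpos hα.1)
  have hA : 0 < (δ / (n * α)) ^ (1/α) := Real.rpow_pos_of_pos ht _
  rw [← Set.Ioc_union_Ioi_eq_Ioi hA.le]
  refine (sq_auxF_intOn_Ioc hα hδ hlam n hA.le).union ?_
  refine (integrableOn_congr_fun (g := fun _ => (0:ℝ))
    (fun z hz => ?_) measurableSet_Ioi).2 (integrableOn_zero)
  simp only
  rw [auxF_eq_zero hα hδ hn (le_of_lt hz)]
  ring

lemma rpow_aux {t : ℝ} (ht : 0 ≤ t) (x : ℝ) : (t ^ (1/α)) ^ x = t ^ (x/α) := by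
  rw [← Real.rpow_mul ht, show 1/α*x = x/α from by ring]

lemma aux_lower (hα : α ∈ Set.Ioo (0:ℝ) 1) (hp : 0 < p) (hδ : 0 < δ) (hlam : 0 < lam)
    {n : ℕ} (hn : 1 ≤ n) :
    ((δ * Real.exp (-(lam * (δ/α) ^ (1/α)) ^ p) / 2) / (2-α)) * ((1/2:ℝ) ^ ((2-α)/α))
        * (δ/(n*α)) ^ ((2-α)/α)
      ≤ ∫ z in Set.Ioi (0:ℝ), auxF α p δ lam n z := by
  set E := Real.exp (-(lam * (δ/α) ^ (1/α)) ^ p) with hE_def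
  have hE : 0 < E := Real.exp_pos _
  have hnpos : (0:ℝ) < n := by exact_mod_cast hn
  have hn1 : (1:ℝ) ≤ n := by exact_mod_cast hn
  have ht : 0 < δ/(n*α) := div_pos hδ (mul_pos hnpos hα.1)
  have hu : 0 < δ/(2*n*α) := div_pos hδ (mul_pos (mul_pos two_pos hnpos) hα.1)
  set B := (δ/(2*(n:ℝ)*α)) ^ (1/α) with hB_def
  have hB : 0 < B := Real.rpow_pos_of_pos hu _
  have key : ∀ z ∈ Set.Ioc (0:ℝ) B, (δ*E/2) * z ^ (1-α) ≤ auxF α p δ lam n z := by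
    intro z hz
    rw [auxF_form n hz.1]
    have hzα : z ^ α ≤ δ/(2*(n:ℝ)*α) := by
      calc z ^ α ≤ B ^ α := Real.rpow_le_rpow hz.1.le hz.2 hα.1.le
        _ = δ/(2*(n:ℝ)*α) := by
            rw [hB_def, ← Real.rpow_mul hu.le, one_div_mul_cancel (ne_of_gt hα.1), Real.rpow_one]
    have hmin : (n:ℝ) * α * z ^ α / δ ≤ 1/2 := by
      have h2 : z ^ α * (2*(n:ℝ)*α) ≤ δ := (le_div_iff₀ (mul_pos (mul_pos two_pos hnpos) hα.1)).1 hzα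
      rw [div_le_div_iff₀ hδ (by norm_num : (0:ℝ) < 2)]
      nlinarith
    have hminle : min ((n:ℝ) * α * z ^ α / δ) 1 ≤ 1/2 := min_le_of_left_le hmin
    have hexp : E ≤ Real.exp (-(lam * z) ^ p) := by
      apply Real.exp_le_exp.2
      apply neg_le_neg
      have hBle : δ/(2*(n:ℝ)*α) ≤ δ/α := by
        rw [div_le_div_iff₀ (mul_pos (mul_pos two_pos hnpos) hα.1) hα.1]
        nlinarith [mul_pos hδ hα.1]
      have hzC : z ≤ (δ/α) ^ (1/α) :=
        le_trans hz.2 (Real.rpow_le_rpow hu.le hBle (one_div_nonneg.2 hα.1.le))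
      exact Real.rpow_le_rpow (mul_nonneg hlam.le hz.1.le) (mul_le_mul_of_nonneg_left hzC hlam.le) hp.le
    have hzp : 0 ≤ z ^ (1-α) := Real.rpow_nonneg hz.1.le _
    have hcomb : (1/2:ℝ) * E ≤
        (1 - min ((n:ℝ) * α * z ^ α / δ) 1) * Real.exp (-(lam * z) ^ p) :=
      mul_le_mul (by linarith) hexp hE.le (by linarith)
    calc (δ*E/2) * z ^ (1-α) = δ * ((1/2:ℝ)*E) * z ^ (1-α) := by ring
      _ ≤ δ * ((1 - min ((n:ℝ) * α * z ^ α / δ) 1) * Real.exp (-(lam * z) ^ p)) * z ^ (1-α) :=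
          mul_le_mul_of_nonneg_right (mul_le_mul_of_nonneg_left hcomb hδ.le) hzp
  have hI1 : IntegrableOn (auxF α p δ lam n) (Set.Ioi 0) := auxF_intOn_Ioi hα hδ hlam hn
  have hnn : 0 ≤ᶠ[ae (volume.restrict (Set.Ioi (0:ℝ)))] auxF α p δ lam n :=
    (ae_restrict_iff' measurableSet_Ioi).2
      (ae_of_all _ fun z hz => auxF_nonneg hα hδ n hz)
  have c1 : ∫ z in Set.Ioc (0:ℝ) B, auxF α p δ lam n z
      ≤ ∫ z in Set.Ioi (0:ℝ), auxF α p δ lam n z :=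
    setIntegral_mono_set hI1 hnn (HasSubset.Subset.eventuallyLE Set.Ioc_subset_Ioi_self)
  have c2 : ∫ z in Set.Ioc (0:ℝ) B, (δ*E/2) * z ^ (1-α)
      ≤ ∫ z in Set.Ioc (0:ℝ) B, auxF α p δ lam n z :=
    setIntegral_mono_on ((aux_intOn_rpow (by linarith [hα.2]) hB.le).const_mul _)
      (auxF_intOn_Ioc hα hδ hlam n hB.le) measurableSet_Ioc key
  have c3 : ∫ z in Set.Ioc (0:ℝ) B, (δ*E/2) * z ^ (1-α) = (δ*E/2) * (B ^ (2-α) / (2-α)) := by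
    rw [MeasureTheory.integral_const_mul, aux_integral_rpow (by linarith [hα.2]) hB.le,
      show (1-α)+1 = 2-α from by ring]
  have c4 : B ^ (2-α) = (1/2:ℝ) ^ ((2-α)/α) * (δ/(n*α)) ^ ((2-α)/α) := by
    rw [hB_def, show δ/(2*(n:ℝ)*α) = (1/2)*(δ/((n:ℝ)*α)) from by ring, rpow_aux (by positivity : (0:ℝ) ≤ (1/2)*(δ/((n:ℝ)*α))),
      Real.mul_rpow (by norm_num) ht.le]
  calc ((δ*E/2)/(2-α)) * ((1/2:ℝ) ^ ((2-α)/α)) * (δ/(n*α)) ^ ((2-α)/α)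
      = (δ*E/2) * (B ^ (2-α) / (2-α)) := by rw [c4]; ring
    _ = ∫ z in Set.Ioc (0:ℝ) B, (δ*E/2) * z ^ (1-α) := c3.symm
    _ ≤ ∫ z in Set.Ioc (0:ℝ) B, auxF α p δ lam n z := c2
    _ ≤ _ := c1

lemma aux_upper (hα : α ∈ Set.Ioo (0:ℝ) 1) (hδ : 0 < δ) (hlam : 0 < lam)
    {n : ℕ} (hn : 1 ≤ n) :
    ∫ z in Set.Ioi (0:ℝ), z ^ 2 * auxF α p δ lam n z
      ≤ (δ/(2-α)) * (δ/(n*α)) ^ ((4-α)/α) := by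
  have hnpos : (0:ℝ) < n := by exact_mod_cast hn
  have ht : 0 < δ/(n*α) := div_pos hδ (mul_pos hnpos hα.1)
  set A := (δ/((n:ℝ)*α)) ^ (1/α) with hA_def
  have hA : 0 < A := Real.rpow_pos_of_pos ht _
  have heq : Set.EqOn (fun z : ℝ => z ^ 2 * auxF α p δ lam n z) (fun _ => (0:ℝ)) (Set.Ioi A) := by
    intro z hz
    simp only
    rw [auxF_eq_zero hα hδ hn (le_of_lt hz)]
    ring
  have hzero : ∫ z in Set.Ioi A, z ^ 2 * auxF α p δ lam n z = 0 := by
    rw [setIntegral_congr_fun measurableSet_Ioi heq]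
    simp
  have hsplit : ∫ z in Set.Ioi (0:ℝ), z ^ 2 * auxF α p δ lam n z
      = ∫ z in Set.Ioc (0:ℝ) A, z ^ 2 * auxF α p δ lam n z := by
    rw [← Set.Ioc_union_Ioi_eq_Ioi hA.le,
      setIntegral_union (Set.Ioc_disjoint_Ioi le_rfl) measurableSet_Ioi
        (sq_auxF_intOn_Ioc hα hδ hlam n hA.le)
        ((integrableOn_congr_fun heq measurableSet_Ioi).2 integrableOn_zero),
      hzero, add_zero]
  have hmono : ∫ z in Set.Ioc (0:ℝ) A, z ^ 2 * auxF α p δ lam n z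
      ≤ ∫ z in Set.Ioc (0:ℝ) A, (A ^ 2 * δ) * z ^ (1-α) := by
    refine setIntegral_mono_on (sq_auxF_intOn_Ioc hα hδ hlam n hA.le)
      ((aux_intOn_rpow (by linarith [hα.2]) hA.le).const_mul _) measurableSet_Ioc ?_
    intro z hz
    have h0 := auxF_nonneg (p := p) (lam := lam) hα hδ n hz.1
    calc z ^ 2 * auxF α p δ lam n z ≤ A ^ 2 * (δ * z ^ (1-α)) :=
          mul_le_mul (pow_le_pow_left₀ hz.1.le hz.2 2) (auxF_le hα hδ hlam n hz.1) h0 (by positivity)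
      _ = (A ^ 2 * δ) * z ^ (1-α) := by ring
  have hval : ∫ z in Set.Ioc (0:ℝ) A, (A ^ 2 * δ) * z ^ (1-α)
      = (A ^ 2 * δ) * (A ^ (2-α) / (2-α)) := by
    rw [MeasureTheory.integral_const_mul, aux_integral_rpow (by linarith [hα.2]) hA.le,
      show (1-α)+1 = 2-α from by ring]
  have hconv : (A ^ 2 * δ) * (A ^ (2-α) / (2-α)) = (δ/(2-α)) * (δ/(n*α)) ^ ((4-α)/α) := by
    have e1 : A ^ (2:ℕ) = (δ/((n:ℝ)*α)) ^ (2/α) := by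
      rw [hA_def, ← Real.rpow_natCast ((δ/((n:ℝ)*α)) ^ (1/α)) 2, rpow_aux ht.le]
      norm_num
    have e2 : A ^ (2-α) = (δ/((n:ℝ)*α)) ^ ((2-α)/α) := rpow_aux ht.le _
    rw [e1, e2, show (4-α)/α = 2/α + (2-α)/α from by ring, Real.rpow_add ht]
    ring
  rw [hsplit, ← hconv]
  exact le_trans hmono (le_of_eq hval)

/-- The variance `σ_n²` of the jumps discarded by truncating the Lévy measure of the
`p`-tempered `α`-stable subordinator with scale `δ` and tempering rate `λ` at level `n`. -/
noncomputable def pTSSdiscardedVar (α p δ lam : ℝ) (n : ℕ) : ℝ :=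
  ∫ z in Set.Ioi (0:ℝ),
    z ^ 2 * (1 - min ((n : ℝ) * α * z ^ α / δ) 1) *
      (δ * Real.exp (-(lam * z) ^ p) * z ^ (-1 - α))

/-- For the pTSS with `α ∈ (0,1)`, `p>0`, `δ>0`, `λ>0`, the discarded
variance `σ_n²` is strictly positive for every `n ≥ 1`, and the Asmussen–Rosiński
condition holds: for every `c > 0`,
`(1/σ_n²) ∫_{z>0, z² > cσ_n²} z² (1 − min(nαz^α/δ,1)) δ e^{−(λz)^p} z^{−1−α} dz → 0`
as `n → ∞`. -/
theorem pTSS_asmussen_rosinski (α p δ lam : ℝ) (hα : α ∈ Set.Ioo (0:ℝ) 1) (hp : 0 < p)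
    (hδ : 0 < δ) (hlam : 0 < lam) :
    (∀ n : ℕ, 1 ≤ n → 0 < pTSSdiscardedVar α p δ lam n) ∧
      ∀ c : ℝ, 0 < c →
        Tendsto (fun n : ℕ =>
            (1 / pTSSdiscardedVar α p δ lam n) *
              ∫ z in {z : ℝ | 0 < z ∧ c * pTSSdiscardedVar α p δ lam n < z ^ 2},
                z ^ 2 * (1 - min ((n : ℝ) * α * z ^ α / δ) 1) *
                  (δ * Real.exp (-(lam * z) ^ p) * z ^ (-1 - α)))
          atTop (nhds 0) := by
  have hα1 := hα.1
  have hα2 := hα.2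
  have h2α : (0:ℝ) < 2 - α := by linarith
  have hσdef : ∀ n : ℕ, pTSSdiscardedVar α p δ lam n
      = ∫ z in Set.Ioi (0:ℝ), auxF α p δ lam n z := fun n => rfl
  set C₂ := ((δ * Real.exp (-(lam * (δ/α) ^ (1/α)) ^ p) / 2) / (2-α)) * ((1/2:ℝ) ^ ((2-α)/α))
    with hC₂def
  have hC₂ : 0 < C₂ :=
    mul_pos (div_pos (by positivity) h2α) (Real.rpow_pos_of_pos (by norm_num) _)
  have hlow : ∀ n : ℕ, 1 ≤ n →
      C₂ * (δ/(n*α)) ^ ((2-α)/α) ≤ pTSSdiscardedVar α p δ lam n := by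
    intro n hn
    rw [hσdef n]
    exact aux_lower hα hp hδ hlam hn
  have hpos : ∀ n : ℕ, 1 ≤ n → 0 < pTSSdiscardedVar α p δ lam n := by
    intro n hn
    have hnpos : (0:ℝ) < n := by exact_mod_cast hn
    have ht : 0 < δ/(n*α) := div_pos hδ (mul_pos hnpos hα1)
    exact lt_of_lt_of_le (mul_pos hC₂ (Real.rpow_pos_of_pos ht _)) (hlow n hn)
  refine ⟨hpos, ?_⟩
  intro c hc
  set K := (δ/(2-α)) * δ / (c * C₂^2 * α) with hKdef
  refine squeeze_zero' ?_ ?_ (tendsto_const_div_atTop_nhds_zero_nat K)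
  · filter_upwards [eventually_ge_atTop 1] with n hn
    have hSmeas : MeasurableSet {z : ℝ | 0 < z ∧ c * pTSSdiscardedVar α p δ lam n < z ^ 2} := by
      rw [Set.setOf_and]
      exact (measurableSet_lt measurable_const measurable_id).inter
        (measurableSet_lt measurable_const (by fun_prop))
    exact mul_nonneg (one_div_nonneg.2 (hpos n hn).le)
      (setIntegral_nonneg hSmeas (fun z hz => auxF_nonneg hα hδ n hz.1))
  · filter_upwards [eventually_ge_atTop 1] with n hn
    set σ := pTSSdiscardedVar α p δ lam n with hσ
    have hσpos := hpos n hn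
    have hnpos : (0:ℝ) < n := by exact_mod_cast hn
    have ht : 0 < δ/(n*α) := div_pos hδ (mul_pos hnpos hα1)
    set S := {z : ℝ | 0 < z ∧ c * σ < z ^ 2} with hSdef
    show (1/σ) * (∫ z in S, auxF α p δ lam n z) ≤ K / (n:ℝ)
    have hSsub : S ⊆ Set.Ioi 0 := fun z hz => hz.1
    have hSmeas : MeasurableSet S := by
      rw [hSdef, Set.setOf_and]
      exact (measurableSet_lt measurable_const measurable_id).inter
        (measurableSet_lt measurable_const (by fun_prop))
    have hint1 := auxF_intOn_Ioi (p := p) hα hδ hlam hn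
    have hint2 := sq_auxF_intOn_Ioi (p := p) hα hδ hlam hn
    set T := ∫ z in Set.Ioi (0:ℝ), z ^ 2 * auxF α p δ lam n z with hTdef
    have hT0 : 0 ≤ T := setIntegral_nonneg measurableSet_Ioi
      (fun z hz => mul_nonneg (sq_nonneg z) (auxF_nonneg hα hδ n hz))
    have hI0 : (∫ z in S, auxF α p δ lam n z)
        ≤ (1/(c*σ)) * ∫ z in S, z ^ 2 * auxF α p δ lam n z := by
      have step : (∫ z in S, auxF α p δ lam n z)
          ≤ ∫ z in S, (1/(c*σ)) * (z ^ 2 * auxF α p δ lam n z) := by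
        refine setIntegral_mono_on (hint1.mono_set hSsub)
          ((hint2.mono_set hSsub).const_mul _) hSmeas ?_
        intro z hz
        have hF0 := auxF_nonneg (p := p) (lam := lam) hα hδ n hz.1
        have hcs : 0 < c*σ := mul_pos hc hσpos
        rw [show (1/(c*σ))*(z ^ 2 * auxF α p δ lam n z)
            = (z ^ 2 * auxF α p δ lam n z)/(c*σ) from by ring, le_div_iff₀ hcs]
        calc auxF α p δ lam n z * (c*σ) ≤ auxF α p δ lam n z * z ^ 2 :=
              mul_le_mul_of_nonneg_left hz.2.le hF0
          _ = z ^ 2 * auxF α p δ lam n z := by ring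
      rwa [MeasureTheory.integral_const_mul] at step
    have hTle : (∫ z in S, z ^ 2 * auxF α p δ lam n z) ≤ T := by
      refine setIntegral_mono_set hint2 ?_ (HasSubset.Subset.eventuallyLE hSsub)
      exact (ae_restrict_iff' measurableSet_Ioi).2
        (ae_of_all _ fun z hz => mul_nonneg (sq_nonneg z) (auxF_nonneg hα hδ n hz))
    have h1 : (1/σ) * (∫ z in S, auxF α p δ lam n z) ≤ T/(c*σ^2) := by
      have h1a := mul_le_mul_of_nonneg_left
        (le_trans hI0 (mul_le_mul_of_nonneg_left hTle (by positivity)))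
        (one_div_nonneg.2 hσpos.le)
      calc (1/σ) * (∫ z in S, auxF α p δ lam n z) ≤ (1/σ)*((1/(c*σ))*T) := h1a
        _ = T/(c*σ^2) := by
            rw [pow_two]
            field_simp
    set Q := (δ/(n*α)) ^ ((4-2*α)/α) with hQdef
    have hQpos : 0 < Q := Real.rpow_pos_of_pos ht _
    have hTbound : T ≤ (δ/(2-α)) * (Q * (δ/(n*α))) := by
      have h := aux_upper (p := p) hα hδ hlam hn
      rwa [show (4-α)/α = (4-2*α)/α + 1 from by
          field_simp
          ring, Real.rpow_add ht, Real.rpow_one] at h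
    have hσ2 : c * (C₂^2 * Q) ≤ c * σ^2 := by
      refine mul_le_mul_of_nonneg_left ?_ hc.le
      have hL : C₂ * (δ/(n*α)) ^ ((2-α)/α) ≤ σ := hlow n hn
      have hLn : 0 ≤ C₂ * (δ/(n*α)) ^ ((2-α)/α) :=
        (mul_pos hC₂ (Real.rpow_pos_of_pos ht _)).le
      have hsq := pow_le_pow_left₀ hLn hL 2
      have hQsq : Q = ((δ/((n:ℝ)*α)) ^ ((2-α)/α))^(2:ℕ) := by
        rw [← Real.rpow_natCast ((δ/((n:ℝ)*α)) ^ ((2-α)/α)) 2, ← Real.rpow_mul ht.le, hQdef]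
        congr 1
        push_cast
        ring
      calc C₂^2 * Q = (C₂ * (δ/(n*α)) ^ ((2-α)/α))^2 := by rw [hQsq, ← mul_pow]
        _ ≤ σ^2 := hsq
    have hfinal : T/(c*σ^2) ≤ ((δ/(2-α)) * (Q * (δ/(n*α)))) / (c * (C₂^2 * Q)) :=
      div_le_div₀
        (mul_nonneg (div_nonneg hδ.le h2α.le) (mul_nonneg hQpos.le ht.le))
        hTbound (mul_pos hc (mul_pos (pow_pos hC₂ 2) hQpos)) hσ2
    have heq : ((δ/(2-α)) * (Q * (δ/(n*α)))) / (c * (C₂^2 * Q)) = K / n := by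
      have hαne : α ≠ 0 := ne_of_gt hα1
      have h2αne : (2-α) ≠ 0 := ne_of_gt h2α
      rw [hKdef]
      field_simp
    exact le_trans h1 (le_trans hfinal (le_of_eq heq))
end
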